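/- Let (E,e,T) be a T-universally complete conditional Riesz triple. Then the set ba(T) of T-absolutely continuous order bounded signed R(T)-valued charges on C_e is an R(T)-submodule of ba(C_e,R(T)) and a projection band in ba(C_e,R(T)). -/

import Mathlib

open scoped Classical

noncomputable section

namespace RieszPaper

universe u v w

/-! ### Basic Riesz space notions -/

section BasicDefs

variable {E : Type u} [Lattice E] [AddCommGroup E]

/-- The positive part `x ⊔ 0`. -/
def rpos (x : E) : E := x ⊔ 0

/-- The set of components of `e`, i.e. elements `p` with `p ⊓ (e - p) = 0`. -/
def Comp (e : E) : Set E := {p | p ⊓ (e - p) = 0}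

/-- Disjoint complement of a set. -/
def disjC (S : Set E) : Set E := {x | ∀ y ∈ S, |x| ⊓ |y| = 0}

/-- The principal band generated by `f` (as double disjoint complement). -/
def pBand (f : E) : Set E := disjC (disjC {f})

/-- `e` is a weak order unit: `e > 0` and the band generated by `e` is all of `E`. -/
def IsWeakUnit (e : E) : Prop := 0 < e ∧ ∀ x : E, 0 ≤ x → x ⊓ e = 0 → x = 0

/-- The chain `x ⊓ n•|f|`, whose supremum is the band projection of `x ≥ 0`
onto the band generated by `f`. -/
def projChain (f x : E) : Set E := {y | ∃ n : ℕ, y = x ⊓ n • |f|}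

/-- Band projection of a positive element onto the band generated by `f`. -/
def projP (f x : E) : E := if h : ∃ s, IsLUB (projChain f x) s then h.choose else 0

/-- Band projection onto the principal band generated by `f`. -/
def proj (f x : E) : E := projP f (rpos x) - projP f (rpos (-x))

/-- The principal projection property. -/
def HasPPP (α : Type u) [Lattice α] [AddCommGroup α] : Prop :=
  ∀ f x : α, 0 ≤ x → ∃ s, IsLUB (projChain f x) s

/-- A subset is sequentially order closed. -/
def SeqOrderClosed (D : Set E) : Prop :=
  (∀ (x : ℕ → E) (l : E), (∀ n, x n ∈ D) → Monotone x → IsLUB (Set.range x) l → l ∈ D) ∧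
  (∀ (x : ℕ → E) (l : E), (∀ n, x n ∈ D) → Antitone x → IsGLB (Set.range x) l → l ∈ D)

end BasicDefs

/-! ### Charges on components -/

section Charges

variable {E : Type u} [Lattice E] [AddCommGroup E]
variable {F : Type v} [Lattice F] [AddCommGroup F]

/-- `μ` is an `F`-valued signed charge on the components of `e`. -/
def IsChargeOn (e : E) (μ : E → F) : Prop :=
  μ 0 = 0 ∧ ∀ p q : E, p ∈ Comp e → q ∈ Comp e → p ⊓ q = 0 → μ (p + q) = μ p + μ q

/-- `μ` is order bounded on the components of `e`. -/
def OrdBddOn (e : E) (μ : E → F) : Prop :=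
  ∃ g : F, 0 ≤ g ∧ ∀ p ∈ Comp e, |μ p| ≤ g

/-- `ba(C_e, F)`: order bounded signed `F`-valued charges on the components of `e`. -/
def baSet (e : E) : Set (E → F) := {μ | IsChargeOn e μ ∧ OrdBddOn e μ}

/-- The order on charges: `μ ≤ ν` iff `ν - μ` is positive on components. -/
def baLe (e : E) (μ ν : E → F) : Prop := ∀ p ∈ Comp e, μ p ≤ ν p

/-- `η` is the least upper bound of `S ⊆ ba(C_e,F)` within `ba(C_e,F)`. -/
def IsLUBba (e : E) (S : Set (E → F)) (η : E → F) : Prop :=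
  η ∈ baSet e ∧ (∀ μ ∈ S, baLe e μ η) ∧
    ∀ ξ ∈ baSet e, (∀ μ ∈ S, baLe e μ ξ) → baLe e η ξ

/-- `η` is the greatest lower bound of `S ⊆ ba(C_e,F)` within `ba(C_e,F)`. -/
def IsGLBba (e : E) (S : Set (E → F)) (η : E → F) : Prop :=
  η ∈ baSet e ∧ (∀ μ ∈ S, baLe e η μ) ∧
    ∀ ξ ∈ baSet e, (∀ μ ∈ S, baLe e ξ μ) → baLe e ξ η

end Charges

section ChargesCCL

variable {E : Type u} [Lattice E] [AddCommGroup E]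
variable {F : Type v} [ConditionallyCompleteLattice F] [AddCommGroup F]

/-- Pointwise formula for the supremum of two charges. -/
def chSupAt (e : E) (μ ν : E → F) (p : E) : F :=
  sSup {v | ∃ q, q ∈ Comp e ∧ q ≤ p ∧ v = μ q + ν (p - q)}

/-- Pointwise formula for the infimum of two charges. -/
def chInfAt (e : E) (μ ν : E → F) (p : E) : F :=
  sInf {v | ∃ q, q ∈ Comp e ∧ q ≤ p ∧ v = μ q + ν (p - q)}

/-- The modulus of a charge, via the Riesz–Kantorovich-type formula. -/
def chargeAbs (e : E) (μ : E → F) : E → F :=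
  fun p => sSup {v | ∃ q, q ∈ Comp e ∧ q ≤ p ∧ v = μ q - μ (p - q)}

/-- The positive part of a charge. -/
def chargePos (e : E) (μ : E → F) : E → F :=
  fun p => sSup {v | ∃ q, q ∈ Comp e ∧ q ≤ p ∧ v = μ q}

/-- The negative part of a charge. -/
def chargeNeg (e : E) (μ : E → F) : E → F :=
  fun p => sSup {v | ∃ q, q ∈ Comp e ∧ q ≤ p ∧ v = -(μ q)}

end ChargesCCL

/-! ### Operators -/

section Ops

variable {E : Type u} [Lattice E] [AddCommGroup E] [Module ℝ E]

def PosOn (Lp : Set E) (φ : E → E) : Prop := ∀ f ∈ Lp, 0 ≤ f → 0 ≤ φ f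

def AddOn (Lp : Set E) (φ : E → E) : Prop :=
  ∀ f g : E, f ∈ Lp → g ∈ Lp → φ (f + g) = φ f + φ g

def SmulOn (Lp : Set E) (φ : E → E) : Prop :=
  ∀ (r : ℝ) (f : E), f ∈ Lp → φ (r • f) = r • φ f

/-- `φ` is a regular operator on `Lp`: a difference of two positive linear maps. -/
def RegularOn (Lp : Set E) (φ : E → E) : Prop :=
  ∃ ψ₁ ψ₂ : E → E, AddOn Lp ψ₁ ∧ AddOn Lp ψ₂ ∧ SmulOn Lp ψ₁ ∧ SmulOn Lp ψ₂ ∧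
    PosOn Lp ψ₁ ∧ PosOn Lp ψ₂ ∧ ∀ f ∈ Lp, φ f = ψ₁ f - ψ₂ f

/-- Uniform convergence of a sequence with regulator `u`. -/
def UnifConv (u : E) (s : ℕ → E) (f : E) : Prop :=
  ∃ ε : ℕ → ℝ, Antitone ε ∧ Filter.Tendsto ε Filter.atTop (nhds 0) ∧
    ∀ n, |f - s n| ≤ ε n • u

end Ops

/-! ### Conditional expectation operators -/

section CondExp

variable {E : Type u} [ConditionallyCompleteLattice E] [AddCommGroup E] [Module ℝ E]

/-- `(E, e, T)` is a conditional Riesz triple: `e` is a weak order unit and `T` is a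
strictly positive conditional expectation operator with `T e = e` whose range is a
Dedekind complete Riesz subspace. -/
structure IsCondTriple (e : E) (T : E →ₗ[ℝ] E) : Prop where
  weakUnit : IsWeakUnit e
  pos : ∀ x : E, 0 ≤ x → 0 ≤ T x
  strictPos : ∀ x : E, 0 < x → 0 < T x
  ordCont : ∀ (A : Set E) (s : E), A.Nonempty → DirectedOn (· ≤ ·) A →
    IsLUB A s → IsLUB (T '' A) (T s)
  idem : ∀ x : E, T (T x) = T x
  unitFix : T e = e
  rangeSupClosed : ∀ x y : E, x ∈ Set.range T → y ∈ Set.range T → x ⊔ y ∈ Set.range T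
  rangeDedekind : ∀ A : Set E, A ⊆ Set.range T → A.Nonempty → BddAbove A →
    sSup A ∈ Set.range T

end CondExp

/-! ### Universal completion and T-universal completeness -/

section Univ

variable {E : Type u} {G : Type v}
variable [ConditionallyCompleteLattice E] [AddCommGroup E] [Module ℝ E]
variable [ConditionallyCompleteLattice G] [AddCommGroup G] [Module ℝ G]

/-- `j : E → G` realizes `G` as a universal completion of `E`. -/
structure IsUnivCompletion (j : E →ₗ[ℝ] G) : Prop where
  bipos : ∀ x : E, 0 ≤ j x ↔ 0 ≤ x
  latHom : ∀ x y : E, j (x ⊔ y) = j x ⊔ j y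
  dense : ∀ z : G, 0 < z → ∃ x : E, 0 < j x ∧ j x ≤ z
  univComplete : ∀ S : Set G, (∀ x ∈ S, 0 ≤ x) →
    S.Pairwise (fun a b => a ⊓ b = 0) → BddAbove S

/-- `E` is `T`-universally complete (relative to the universal completion `j : E → G`):
every nonempty upwards directed subset `A ⊆ E` such that `j[T[A]]` is bounded above in
`G` has a supremum in `E`. -/
def TUnivComplete (T : E →ₗ[ℝ] E) (j : E →ₗ[ℝ] G) : Prop :=
  ∀ A : Set E, A.Nonempty → DirectedOn (· ≤ ·) A →
    BddAbove (⇑j '' (⇑T '' A)) → BddAbove A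

end Univ

/-- `mul` is a commutative `f`-algebra multiplication with unit `u`. -/
structure IsFAlgebraMul {G : Type v} [Lattice G] [AddCommGroup G] [Module ℝ G]
    (u : G) (mul : G → G → G) : Prop where
  comm : ∀ x y, mul x y = mul y x
  assoc : ∀ x y z, mul (mul x y) z = mul x (mul y z)
  add_left : ∀ x y z, mul (x + y) z = mul x z + mul y z
  smul_left : ∀ (r : ℝ) (x y), mul (r • x) y = r • mul x y
  one_mul : ∀ x, mul u x = x
  mul_nonneg : ∀ x y, 0 ≤ x → 0 ≤ y → 0 ≤ mul x y
  disj : ∀ x y z, x ⊓ y = 0 → 0 ≤ z → mul x z ⊓ y = 0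

/-! ### Bundled T-universally complete conditional Riesz triples -/

/-- A `T`-universally complete conditional Riesz triple `(E, e, T)`, together with a
universal completion `j : E → G` carrying its `f`-algebra multiplication (with unit
`j e`).  Since `E = L¹(T)` is an `R(T)`-module, products of elements of `L^∞(T)` with
elements of `E` again lie in `E` (`mulClosed`). -/
structure CRT (E : Type u) (G : Type v)
    [ConditionallyCompleteLattice E] [AddCommGroup E] [Module ℝ E]
    [CovariantClass E E (· + ·) (· ≤ ·)] [PosSMulMono ℝ E]
    [ConditionallyCompleteLattice G] [AddCommGroup G] [Module ℝ G]
    [CovariantClass G G (· + ·) (· ≤ ·)] [PosSMulMono ℝ G] where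
  e : E
  T : E →ₗ[ℝ] E
  j : E →ₗ[ℝ] G
  mul : G → G → G
  triple : IsCondTriple e T
  compl : IsUnivCompletion j
  falg : IsFAlgebraMul (j e) mul
  tuc : TUnivComplete T j
  mulClosed : ∀ f g : E, (∃ h : E, h ∈ Set.range T ∧ 0 ≤ h ∧ |f| ≤ h) →
    mul (j f) (j g) ∈ Set.range ⇑j

namespace CRT

variable {E : Type u} {G : Type v}
variable [ConditionallyCompleteLattice E] [AddCommGroup E] [Module ℝ E]
  [CovariantClass E E (· + ·) (· ≤ ·)] [PosSMulMono ℝ E]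
variable [ConditionallyCompleteLattice G] [AddCommGroup G] [Module ℝ G]
  [CovariantClass G G (· + ·) (· ≤ ·)] [PosSMulMono ℝ G]
variable (C : CRT E G)

/-- The range `R(T)`. -/
def R : Set E := Set.range ⇑C.T

/-- The product `g · f` of two elements of `E = L¹(T)`, computed in the universal
completion (meaningful whenever the product lies again in `E`, e.g. for
`g ∈ R(T)` or `g ∈ L^∞(T)`). -/
def sm (g f : E) : E := @Function.invFun E G ⟨0⟩ (⇑C.j) (C.mul (C.j g) (C.j f))

/-- `L^∞(T) = {f : |f| ≤ g for some g ∈ R(T)₊}`. -/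
def Linf : Set E := {f | ∃ h ∈ C.R, 0 ≤ h ∧ |f| ≤ h}

/-- The `R(T)`-valued norm `‖f‖_{T,1} = T |f|`. -/
def nrm1 (f : E) : E := C.T |f|

/-- The `R(T)`-valued norm `‖f‖_{T,∞} = inf {α ∈ R(T)₊ : |f| ≤ α}`. -/
def nrmInf (f : E) : E := sInf {a | a ∈ C.R ∧ 0 ≤ a ∧ |f| ≤ a}

/-- Order bounded signed `R(T)`-valued charges on the components of `u`. -/
def baR (u : E) : Set (E → E) :=
  {μ | IsChargeOn u μ ∧ (∀ p ∈ Comp u, μ p ∈ C.R) ∧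
     ∃ g ∈ C.R, 0 ≤ g ∧ ∀ p ∈ Comp u, |μ p| ≤ g}

/-- `ba(T)`: the `T`-absolutely continuous charges in `ba(C_e, R(T))`. -/
def baT : Set (E → E) :=
  {μ | μ ∈ C.baR C.e ∧ ∀ p ∈ Comp C.e, μ p ∈ pBand (C.T p)}

/-- `x = ∑ αᵢ pᵢ` is a standard representation of the `e`-step function `x` with
`R(T)`-coefficients. -/
def IsStdRep (x : E) (n : ℕ) (α p : Fin n → E) : Prop :=
  (∀ i, α i ∈ C.R) ∧ (∀ i, p i ∈ Comp C.e) ∧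
  (∀ i j, i ≠ j → p i ⊓ p j = 0) ∧ (∑ i, p i) = C.e ∧
  x = ∑ i, C.sm (α i) (p i)

/-- `S_e(T)`: the `e`-step functions with `R(T)`-coefficients. -/
def Steps : Set E := {x | ∃ (n : ℕ) (α p : Fin n → E), C.IsStdRep x n α p}

/-- The integral `I_μ` of a step function: `I_μ (∑ αᵢ pᵢ) = ∑ αᵢ μ(pᵢ)`. -/
def Imu (μ : E → E) (x : E) : E :=
  @Classical.epsilon E ⟨0⟩ fun v =>
    ∃ (n : ℕ) (α p : Fin n → E), C.IsStdRep x n α p ∧ v = ∑ i, C.sm (α i) (μ (p i))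

/-- The integral of a positive element of `L^∞(T)` with respect to a positive charge. -/
def intPos (μ : E → E) (f : E) : E :=
  sSup {v | ∃ g ∈ C.Steps, 0 ≤ g ∧ g ≤ f ∧ v = C.Imu μ g}

/-- The integral `∫ f dμ = ∫ f⁺ dμ⁺ − ∫ f⁻ dμ⁺ − ∫ f⁺ dμ⁻ + ∫ f⁻ dμ⁻`. -/
def integral (μ : E → E) (f : E) : E :=
  C.intPos (chargePos C.e μ) (rpos f) - C.intPos (chargePos C.e μ) (rpos (-f))
    - C.intPos (chargeNeg C.e μ) (rpos f) + C.intPos (chargeNeg C.e μ) (rpos (-f))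

/-- Membership in `L^r(Lp, R(T))`: regular linear operators with values in `R(T)`. -/
structure MemLr (Lp : Set E) (φ : E → E) : Prop where
  add : AddOn Lp φ
  smul : SmulOn Lp φ
  mem : ∀ f ∈ Lp, φ f ∈ C.R
  regular : RegularOn Lp φ

/-- Membership in the `T`-strong dual of `(Lp, nrm)`: `R(T)`-linear, regular,
`nrm`-bounded maps into `R(T)`. -/
structure MemDual (Lp : Set E) (nrm : E → E) (φ : E → E) : Prop where
  add : AddOn Lp φ
  smul : SmulOn Lp φ
  modHom : ∀ g f : E, g ∈ C.R → f ∈ Lp → φ (C.sm g f) = C.sm g (φ f)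
  mem : ∀ f ∈ Lp, φ f ∈ C.R
  regular : RegularOn Lp φ
  bdd : ∃ k ∈ C.R, 0 ≤ k ∧ ∀ f ∈ Lp, |φ f| ≤ C.sm k (nrm f)

/-- The `R(T)`-valued norm on the `T`-strong dual. -/
def dualNorm (Lp : Set E) (nrm : E → E) (φ : E → E) : E :=
  sInf {g | g ∈ C.R ∧ 0 ≤ g ∧ ∀ f ∈ Lp, |φ f| ≤ C.sm g (nrm f)}

/-- `|φ| ≤ |ψ|` in `L^r(Lp, R(T))`, via the Riesz–Kantorovich formula. -/
def OpAbsLe (Lp : Set E) (φ ψ : E → E) : Prop :=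
  ∀ f ∈ Lp, 0 ≤ f → ∀ g ∈ Lp, |g| ≤ f →
    |φ g| ≤ sSup {v | ∃ h, h ∈ Lp ∧ |h| ≤ f ∧ v = |ψ h|}

/-- The canonical partial inverse of `h` in `R(T)`: the element `g` of the band
generated by `|h|` with `h g = P_{|h|} e`. -/
def pinv (h : E) : E :=
  @Classical.epsilon E ⟨0⟩ fun g =>
    g ∈ C.R ∧ g ∈ pBand (|h|) ∧ C.sm h g = proj (|h|) C.e

end CRT

/-! ### Bundled Dedekind complete Riesz spaces, for existential statements -/

structure BRiesz : Type (u + 1) where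
  carrier : Type u
  [ccl : ConditionallyCompleteLattice carrier]
  [grp : AddCommGroup carrier]
  [mod : Module ℝ carrier]
  [cov : CovariantClass carrier carrier (· + ·) (· ≤ ·)]
  [psm : PosSMulMono ℝ carrier]

attribute [instance] BRiesz.ccl BRiesz.grp BRiesz.mod BRiesz.cov BRiesz.psm

/-- `(F, ẽ, T̃)` together with `i : E → F` is a `T`-universal completion of `(E, e, T)`. -/
structure IsTUnivCompletion
    {E : Type u} [ConditionallyCompleteLattice E] [AddCommGroup E] [Module ℝ E]
    {F : Type v} [ConditionallyCompleteLattice F] [AddCommGroup F] [Module ℝ F]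
    (e : E) (T : E →ₗ[ℝ] E) (e' : F) (T' : F →ₗ[ℝ] F) (i : E →ₗ[ℝ] F) : Prop where
  triple : IsCondTriple e' T'
  tuniv : ∃ (U : BRiesz.{v}) (j : F →ₗ[ℝ] U.carrier),
    IsUnivCompletion j ∧ TUnivComplete T' j
  bipos : ∀ x : E, 0 ≤ i x ↔ 0 ≤ x
  latHom : ∀ x y : E, i (x ⊔ y) = i x ⊔ i y
  dense : ∀ z : F, 0 < z → ∃ x : E, 0 < i x ∧ i x ≤ z
  unit : i e = e'
  comm : ∀ x : E, T' (i x) = i (T x)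


/-! ### Powers via functional calculus, for the spaces `L^p(T)` -/

/-- A `T`-universally complete conditional Riesz triple together with the power
functions `x ↦ x^p` (`x ≥ 0`, `p > 0`) of the functional calculus on the universal
completion. -/
structure CRTP (E : Type u) (G : Type v)
    [ConditionallyCompleteLattice E] [AddCommGroup E] [Module ℝ E]
    [CovariantClass E E (· + ·) (· ≤ ·)] [PosSMulMono ℝ E]
    [ConditionallyCompleteLattice G] [AddCommGroup G] [Module ℝ G]
    [CovariantClass G G (· + ·) (· ≤ ·)] [PosSMulMono ℝ G]
    extends CRT E G where
  epow : G → ℝ → G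
  epow_one : ∀ x : G, 0 ≤ x → epow x 1 = x
  epow_nonneg : ∀ (x : G) (p : ℝ), 0 ≤ x → 0 < p → 0 ≤ epow x p
  epow_mono : ∀ (x y : G) (p : ℝ), 0 ≤ x → x ≤ y → 0 < p → epow x p ≤ epow y p
  epow_unit : ∀ p : ℝ, 0 < p → epow (toCRT.j toCRT.e) p = toCRT.j toCRT.e
  epow_exp_mul : ∀ (x : G) (p q : ℝ), 0 ≤ x → 0 < p → 0 < q →
    epow (epow x p) q = epow x (p * q)
  epow_mul : ∀ (x y : G) (p : ℝ), 0 ≤ x → 0 ≤ y → 0 < p →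
    epow (toCRT.mul x y) p = toCRT.mul (epow x p) (epow y p)
  epow_succ : ∀ (x : G) (n : ℕ), 0 ≤ x → 0 < n →
    epow x ((n : ℝ) + 1) = toCRT.mul (epow x (n : ℝ)) x
  epow_sup : ∀ (x y : G) (p : ℝ), 0 ≤ x → 0 ≤ y → 0 < p →
    epow (x ⊔ y) p = epow x p ⊔ epow y p
  epow_rangeT : ∀ (x : E) (p : ℝ), 0 ≤ x → 0 < p → x ∈ Set.range ⇑toCRT.T →
    epow (toCRT.j x) p ∈ ⇑toCRT.j '' Set.range ⇑toCRT.T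

namespace CRTP

variable {E : Type u} {G : Type v}
variable [ConditionallyCompleteLattice E] [AddCommGroup E] [Module ℝ E]
  [CovariantClass E E (· + ·) (· ≤ ·)] [PosSMulMono ℝ E]
variable [ConditionallyCompleteLattice G] [AddCommGroup G] [Module ℝ G]
  [CovariantClass G G (· + ·) (· ≤ ·)] [PosSMulMono ℝ G]
variable (C : CRTP E G)

/-- the `p`-th power of `x ∈ E`, computed in the universal completion. -/
def powE (x : E) (p : ℝ) : E :=
  @Function.invFun E G ⟨0⟩ (⇑C.toCRT.j) (C.epow (C.toCRT.j x) p)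

/-- `L^p(T) = {f ∈ L¹(T) : |f|^p ∈ L¹(T)}` for `p ∈ [1, ∞)`. -/
def LpSet (p : ℝ) : Set E := {f | C.epow (C.toCRT.j |f|) p ∈ Set.range ⇑C.toCRT.j}

/-- The `R(T)`-valued norm `‖f‖_{T,p} = (T |f|^p)^{1/p}`. -/
def nrmP (p : ℝ) (f : E) : E := C.powE (C.toCRT.T (C.powE |f| p)) (1 / p)

end CRTP


/-! ### Auxiliary lemmas -/
set_option linter.unusedSectionVars false

section AuxLGroup

variable {α : Type*} [Lattice α] [AddCommGroup α] [CovariantClass α α (· + ·) (· ≤ ·)]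

lemma rp_add_eq_sup_of_disj {a b : α} (h : a ⊓ b = 0) : a + b = a ⊔ b := by
  rw [← inf_add_sup a b, h, zero_add]

lemma rp_inf_add_le {a b c : α} (ha : 0 ≤ a) (hb : 0 ≤ b) (hc : 0 ≤ c) :
    a ⊓ (b + c) ≤ a ⊓ b + a ⊓ c := by
  have hac : (0:α) ≤ a ⊓ c := le_inf ha hc
  have key : a ⊓ (b + c) = (a - b) ⊓ c + b := by
    rw [inf_add, sub_add_cancel, add_comm c b]
  have h1 : a ⊓ (b + c) ≤ b + a ⊓ c := by
    rw [key, add_comm]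
    exact add_le_add_right (inf_le_inf_right c (sub_le_self a hb)) b
  have h2 : a ⊓ (b + c) - a ⊓ c ≤ a ⊓ b := by
    refine le_inf ?_ ?_
    · exact sub_le_iff_le_add.mpr (inf_le_left.trans (le_add_of_nonneg_right hac))
    · exact sub_le_iff_le_add.mpr h1
  exact sub_le_iff_le_add.mp h2

lemma rp_disj_add {a b c : α} (ha : 0 ≤ a) (hb : 0 ≤ b) (hc : 0 ≤ c)
    (h1 : a ⊓ c = 0) (h2 : b ⊓ c = 0) : (a + b) ⊓ c = 0 := by
  refine le_antisymm ?_ (le_inf (add_nonneg ha hb) hc)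
  calc (a + b) ⊓ c = c ⊓ (a + b) := inf_comm _ _
    _ ≤ c ⊓ a + c ⊓ b := rp_inf_add_le hc ha hb
    _ = 0 := by rw [inf_comm c a, inf_comm c b, h1, h2, add_zero]

lemma rp_disj_of_le {a' a c : α} (ha' : 0 ≤ a') (h : a' ≤ a) (hc : 0 ≤ c)
    (hd : a ⊓ c = 0) : a' ⊓ c = 0 :=
  le_antisymm (le_trans (inf_le_inf_right c h) hd.le) (le_inf ha' hc)

lemma rp_disj_nsmul {a c : α} (ha : 0 ≤ a) (hc : 0 ≤ c) (h : a ⊓ c = 0) (n : ℕ) :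
    (n • a) ⊓ c = 0 := by
  induction n with
  | zero => rw [zero_nsmul]; exact inf_eq_left.mpr hc
  | succ n ih => rw [succ_nsmul]; exact rp_disj_add (nsmul_nonneg ha n) ha hc ih h

lemma rp_posPart_le_abs (a : α) : a⁺ ≤ |a| := by
  rw [← posPart_add_negPart a]; exact le_add_of_nonneg_right (negPart_nonneg a)

lemma rp_negPart_le_abs (a : α) : a⁻ ≤ |a| := by
  rw [← posPart_add_negPart a]; exact le_add_of_nonneg_left (posPart_nonneg a)

lemma rp_abs_disj_iff {a c : α} (hc : 0 ≤ c) :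
    |a| ⊓ c = 0 ↔ a⁺ ⊓ c = 0 ∧ a⁻ ⊓ c = 0 := by
  constructor
  · intro h
    exact ⟨rp_disj_of_le (posPart_nonneg a) (rp_posPart_le_abs a) hc h,
      rp_disj_of_le (negPart_nonneg a) (rp_negPart_le_abs a) hc h⟩
  · rintro ⟨h1, h2⟩
    rw [← posPart_add_negPart a]
    exact rp_disj_add (posPart_nonneg a) (negPart_nonneg a) hc h1 h2

lemma rp_sum_le_sum {ι : Type*} (s : Finset ι) {f g : ι → α} (h : ∀ i ∈ s, f i ≤ g i) :
    ∑ i ∈ s, f i ≤ ∑ i ∈ s, g i := by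
  classical
  induction s using Finset.induction_on with
  | empty => simp
  | insert _ _ hnotmem ih =>
    rw [Finset.sum_insert hnotmem, Finset.sum_insert hnotmem]
    exact add_le_add (h _ (Finset.mem_insert_self _ _))
      (ih (fun i hi => h i (Finset.mem_insert_of_mem hi)))

lemma rp_abs_sub_le (a b : α) : |a - b| ≤ |a| + |b| := by
  rw [sub_eq_add_neg]
  refine (abs_add_le a (-b)).trans ?_
  rw [abs_neg]

end AuxLGroup

section AuxCCL

variable {α : Type*} [ConditionallyCompleteLattice α] [AddCommGroup α]
  [CovariantClass α α (· + ·) (· ≤ ·)]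

lemma rp_arch {a b : α} (h : ∀ n : ℕ, n • a ≤ b) : a ≤ 0 := by
  have hbdd : BddAbove (Set.range fun n : ℕ => n • a) := ⟨b, by rintro x ⟨n, rfl⟩; exact h n⟩
  have hne : (Set.range fun n : ℕ => n • a).Nonempty := ⟨0 • a, 0, rfl⟩
  set s := sSup (Set.range fun n : ℕ => n • a) with hs
  have hsc : s ≤ s - a := by
    refine csSup_le hne ?_
    rintro x ⟨n, rfl⟩
    refine le_sub_iff_add_le.mpr ?_
    have : (n + 1) • a ≤ s := le_csSup hbdd ⟨n + 1, rfl⟩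
    rwa [succ_nsmul] at this
  have : s + a ≤ s := le_sub_iff_add_le.mp hsc
  exact (add_le_iff_nonpos_right s).mp this

/-- An existing LUB of a set of elements disjoint from `d` is disjoint from `d`. -/
lemma rp_isLUB_disj {S : Set α} {s d : α} (hS : S.Nonempty) (hlub : IsLUB S s) (hd : 0 ≤ d)
    (h : ∀ x ∈ S, |x| ⊓ d = 0) : |s| ⊓ d = 0 := by
  set c := s⁺ ⊓ d with hc
  have hc0 : (0:α) ≤ c := le_inf (posPart_nonneg s) hd
  have hub : s⁺ - c ∈ upperBounds S := by
    intro x hx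
    have hxd : x⁺ ⊓ c = 0 := by
      refine le_antisymm ?_ (le_inf (posPart_nonneg x) hc0)
      calc x⁺ ⊓ c ≤ x⁺ ⊓ d := inf_le_inf_left _ inf_le_right
        _ ≤ |x| ⊓ d := inf_le_inf_right _ (rp_posPart_le_abs x)
        _ = 0 := h x hx
    have : x⁺ + c = x⁺ ⊔ c := rp_add_eq_sup_of_disj hxd
    have h2 : x⁺ + c ≤ s⁺ := by
      rw [this]
      exact sup_le (posPart_mono (hlub.1 hx)) inf_le_left
    exact (le_posPart x).trans (le_sub_iff_add_le.mpr h2)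
  have h1 : s ≤ s⁺ - c := hlub.2 hub
  have h2 : c ≤ s⁻ := by
    have hcs : s + c ≤ s⁺ := le_sub_iff_add_le.mp h1
    have hh := posPart_sub_negPart s
    have hps : s⁺ - s = s⁻ := by
      calc s⁺ - s = s⁺ - (s⁺ - s⁻) := by rw [hh]
        _ = s⁻ := by abel
    calc c = s + c - s := by abel
      _ ≤ s⁺ - s := sub_le_sub_right hcs s
      _ = s⁻ := hps
  have hcp : c = 0 :=
    le_antisymm (le_trans (le_inf inf_le_left h2) (posPart_inf_negPart_eq_zero s).le) hc0
  obtain ⟨x₀, hx₀⟩ := hS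
  have hneg : s⁻ ⊓ d = 0 := by
    refine rp_disj_of_le (negPart_nonneg s) ?_ hd (h x₀ hx₀)
    exact le_trans (negPart_anti (hlub.1 hx₀)) (rp_negPart_le_abs x₀)
  exact (rp_abs_disj_iff hd).mpr ⟨hcp, hneg⟩

/-- Telescope: the residual of the truncation supremum is disjoint from `f`. -/
lemma rp_isLUB_trunc {y f s : α} (hy : 0 ≤ y) (hf : 0 ≤ f)
    (hlub : IsLUB (Set.range fun n : ℕ => y ⊓ n • f) s) : (y - s) ⊓ f = 0 := by
  have hsy : s ≤ y := hlub.2 (by rintro x ⟨n, rfl⟩; exact inf_le_left)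
  set c := (y - s) ⊓ f with hc
  have hc0 : (0:α) ≤ c := le_inf (sub_nonneg.2 hsy) hf
  have hstep : ∀ n : ℕ, y ⊓ n • f + c ≤ y ⊓ (n+1) • f := by
    intro n
    refine le_inf ?_ ?_
    · have h1 : y ⊓ n • f ≤ s := hlub.1 ⟨n, rfl⟩
      calc y ⊓ n • f + c ≤ y ⊓ n • f + (y - s) := add_le_add_right inf_le_left _
        _ ≤ s + (y - s) := add_le_add_left h1 _
        _ = y := by abel
    · calc y ⊓ n • f + c ≤ n • f + f := add_le_add inf_le_right inf_le_right
        _ = (n+1) • f := (succ_nsmul f n).symm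
  have hub : s - c ∈ upperBounds (Set.range fun n : ℕ => y ⊓ n • f) := by
    rintro x ⟨n, rfl⟩
    exact le_sub_iff_add_le.mpr ((hstep n).trans (hlub.1 ⟨n+1, rfl⟩))
  have hsc : s ≤ s - c := hlub.2 hub
  have : s + c ≤ s := le_sub_iff_add_le.mp hsc
  exact le_antisymm ((add_le_iff_nonpos_right s).mp this) hc0

lemma rp_csSup_add_le {A B : Set α} {c : α} (hA : A.Nonempty) (hB : B.Nonempty)
    (h : ∀ x ∈ A, ∀ y ∈ B, x + y ≤ c) : sSup A + sSup B ≤ c := by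
  have h1 : ∀ y ∈ B, sSup A ≤ c - y := fun y hy =>
    csSup_le hA (fun x hx => le_sub_iff_add_le.mpr (h x hx y hy))
  have h2 : sSup B ≤ c - sSup A := by
    refine csSup_le hB (fun y hy => ?_)
    have := h1 y hy
    calc y = y + sSup A - sSup A := by abel
      _ ≤ c - sSup A := sub_le_sub_right (by rw [add_comm]; exact le_sub_iff_add_le.mp (h1 y hy)) _
  calc sSup A + sSup B ≤ sSup A + (c - sSup A) := add_le_add_right h2 _
    _ = c := by abel

end AuxCCL

section AuxSmul

variable {α : Type*} [Lattice α] [AddCommGroup α] [CovariantClass α α (· + ·) (· ≤ ·)]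
  [Module ℝ α] [PosSMulMono ℝ α]

lemma rp_abs_def (x : α) : |x| = x ⊔ -x := rfl

lemma rp_smul_sup {r : ℝ} (hr : 0 ≤ r) (x y : α) : r • (x ⊔ y) = r • x ⊔ r • y := by
  rcases eq_or_lt_of_le hr with h | h
  · rw [← h, zero_smul, zero_smul, zero_smul, sup_idem]
  · refine le_antisymm ?_ (sup_le (smul_le_smul_of_nonneg_left le_sup_left hr)
      (smul_le_smul_of_nonneg_left le_sup_right hr))
    have hinv : (0:ℝ) ≤ r⁻¹ := le_of_lt (inv_pos.mpr h)
    have hx : x ≤ r⁻¹ • (r • x ⊔ r • y) :=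
      calc x = r⁻¹ • (r • x) := (inv_smul_smul₀ h.ne' x).symm
        _ ≤ r⁻¹ • (r • x ⊔ r • y) := smul_le_smul_of_nonneg_left le_sup_left hinv
    have hy : y ≤ r⁻¹ • (r • x ⊔ r • y) :=
      calc y = r⁻¹ • (r • y) := (inv_smul_smul₀ h.ne' y).symm
        _ ≤ r⁻¹ • (r • x ⊔ r • y) := smul_le_smul_of_nonneg_left le_sup_right hinv
    calc r • (x ⊔ y) ≤ r • (r⁻¹ • (r • x ⊔ r • y)) :=
          smul_le_smul_of_nonneg_left (sup_le hx hy) hr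
      _ = r • x ⊔ r • y := smul_inv_smul₀ h.ne' _

lemma rp_abs_smul_of_nonneg {r : ℝ} (h : 0 ≤ r) (x : α) : |r • x| = r • |x| := by
  rw [rp_abs_def, rp_abs_def x, rp_smul_sup h, smul_neg]

lemma rp_abs_smul (r : ℝ) (x : α) : |r • x| = |r| • |x| := by
  rcases le_or_gt 0 r with h | h
  · rw [abs_of_nonneg h, rp_abs_smul_of_nonneg h]
  · have h1 : |r • x| = |(-r) • x| := by rw [neg_smul, abs_neg]
    rw [h1, rp_abs_smul_of_nonneg (by linarith : (0:ℝ) ≤ -r), abs_of_neg h]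

lemma rp_smul_le_nsmul {r : ℝ} {x : α} (hx : 0 ≤ x) {n : ℕ} (h : r ≤ (n:ℝ)) :
    r • x ≤ n • x := by
  have h1 : r • x ≤ (n:ℝ) • x := by
    have : (0:α) ≤ ((n:ℝ) - r) • x := smul_nonneg (by linarith) hx
    have h2 : r • x + ((n:ℝ) - r) • x = (n:ℝ) • x := by rw [← add_smul]; ring_nf
    calc r • x ≤ r • x + ((n:ℝ) - r) • x := le_add_of_nonneg_right this
      _ = (n:ℝ) • x := h2
  rwa [Nat.cast_smul_eq_nsmul] at h1

end AuxSmul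

section AuxSmul2
variable {α : Type*} [Lattice α] [AddCommGroup α] [CovariantClass α α (· + ·) (· ≤ ·)]
  [Module ℝ α] [PosSMulMono ℝ α]

lemma rp_smul_le_smul {r s : ℝ} {x : α} (h : r ≤ s) (hx : 0 ≤ x) : r • x ≤ s • x := by
  have h1 : (0:α) ≤ (s - r) • x := smul_nonneg (by linarith) hx
  have h2 : r • x + (s - r) • x = s • x := by rw [← add_smul]; ring_nf
  calc r • x ≤ r • x + (s - r) • x := le_add_of_nonneg_right h1
    _ = s • x := h2

end AuxSmul2

section AuxComp
set_option linter.unusedSectionVars false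

variable {α : Type*} [Lattice α] [AddCommGroup α] [CovariantClass α α (· + ·) (· ≤ ·)] {e : α}

lemma rp_mem_comp {p : α} : p ∈ Comp e ↔ p ⊓ (e - p) = 0 := Iff.rfl

lemma rp_comp_sup_eq {p : α} (hp : p ∈ Comp e) : p ⊔ (e - p) = e := by
  have h := inf_add_sup p (e - p)
  rw [rp_mem_comp.mp hp, zero_add] at h
  rw [h]; abel

lemma rp_comp_le {p : α} (hp : p ∈ Comp e) : p ≤ e :=
  le_sup_left.trans (rp_comp_sup_eq hp).le

lemma rp_comp_nonneg {p : α} (hp : p ∈ Comp e) : 0 ≤ p := by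
  have h2 : e - p ≤ e := le_sup_right.trans (rp_comp_sup_eq hp).le
  exact sub_le_self_iff e |>.mp h2

lemma rp_comp_zero (he : 0 ≤ e) : (0:α) ∈ Comp e := by
  rw [rp_mem_comp, sub_zero]; exact inf_eq_left.mpr he

lemma rp_comp_self (he : 0 ≤ e) : e ∈ Comp e := by
  rw [rp_mem_comp, sub_self]; exact inf_eq_right.mpr he

lemma rp_comp_compl {p : α} (hp : p ∈ Comp e) : e - p ∈ Comp e := by
  rw [rp_mem_comp, sub_sub_cancel, inf_comm]; exact hp

lemma rp_comp_inf {p q : α} (hp : p ∈ Comp e) (hq : q ∈ Comp e) : p ⊓ q ∈ Comp e := by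
  rw [rp_mem_comp]
  have h0 : (0:α) ≤ p ⊓ q := le_inf (rp_comp_nonneg hp) (rp_comp_nonneg hq)
  have he1 : (0:α) ≤ e - p := sub_nonneg.2 (rp_comp_le hp)
  have he2 : (0:α) ≤ e - q := sub_nonneg.2 (rp_comp_le hq)
  refine le_antisymm ?_ (le_inf h0 (sub_nonneg.2 (inf_le_left.trans (rp_comp_le hp))))
  have hsub : e - p ⊓ q = (e - p) ⊔ (e - q) := sub_inf p q e
  calc (p⊓q) ⊓ (e - p⊓q) = (p⊓q) ⊓ ((e-p) ⊔ (e-q)) := by rw [hsub]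
    _ ≤ (p⊓q) ⊓ ((e-p) + (e-q)) := inf_le_inf_left _
        (sup_le (le_add_of_nonneg_right he2) (le_add_of_nonneg_left he1))
    _ ≤ (p⊓q)⊓(e-p) + (p⊓q)⊓(e-q) := rp_inf_add_le h0 he1 he2
    _ ≤ p⊓(e-p) + q⊓(e-q) := add_le_add (inf_le_inf_right _ inf_le_left)
        (inf_le_inf_right _ inf_le_right)
    _ = 0 := by rw [rp_mem_comp.mp hp, rp_mem_comp.mp hq, add_zero]

lemma rp_comp_sub {p q : α} (hp : p ∈ Comp e) (hq : q ∈ Comp e) (hle : q ≤ p) :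
    p - q ∈ Comp e := by
  rw [rp_mem_comp]
  have hq0 := rp_comp_nonneg hq
  have hp0 := rp_comp_nonneg hp
  have hpe := rp_comp_le hp
  have h1 : (0:α) ≤ p - q := sub_nonneg.2 hle
  have he2 : e - (p - q) = (e - p) + q := by abel
  have key : (p-q) ⊓ (e - (p-q)) ≤ q := by
    rw [he2]
    calc (p-q) ⊓ ((e-p) + q) ≤ p ⊓ ((e-p)+q) := inf_le_inf_right _ (sub_le_self p hq0)
      _ ≤ p⊓(e-p) + p⊓q := rp_inf_add_le hp0 (sub_nonneg.2 hpe) hq0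
      _ ≤ 0 + q := add_le_add (rp_mem_comp.mp hp).le inf_le_right
      _ = q := zero_add q
  have key2 : (p-q)⊓(e-(p-q)) ≤ e - q := inf_le_left.trans (sub_le_sub_right hpe q)
  refine le_antisymm ?_ (le_inf h1 (sub_nonneg.2 ((sub_le_self p hq0).trans hpe)))
  exact (le_inf key key2).trans (rp_mem_comp.mp hq).le

lemma rp_comp_add {p q : α} (hp : p ∈ Comp e) (hq : q ∈ Comp e) (hd : p ⊓ q = 0) :
    p + q ∈ Comp e := by
  have hp0 := rp_comp_nonneg hp
  have hq0 := rp_comp_nonneg hq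
  have hsum_le : p + q ≤ e := by
    rw [rp_add_eq_sup_of_disj hd]; exact sup_le (rp_comp_le hp) (rp_comp_le hq)
  rw [rp_mem_comp]
  have hc : (0:α) ≤ e - (p+q) := sub_nonneg.2 hsum_le
  refine le_antisymm ?_ (le_inf (add_nonneg hp0 hq0) hc)
  calc (p+q) ⊓ (e - (p+q)) = (e - (p+q)) ⊓ (p + q) := inf_comm _ _
    _ ≤ (e-(p+q))⊓p + (e-(p+q))⊓q := rp_inf_add_le hc hp0 hq0
    _ ≤ (e-p)⊓p + (e-q)⊓q := add_le_add
        (inf_le_inf_right _ (sub_le_sub_left (le_add_of_nonneg_right hq0) e))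
        (inf_le_inf_right _ (sub_le_sub_left (le_add_of_nonneg_left hp0) e))
    _ = 0 := by rw [inf_comm (e-p) p, inf_comm (e-q) q, rp_mem_comp.mp hp,
        rp_mem_comp.mp hq, add_zero]

lemma rp_comp_q_disj {p q : α} (hp : p ∈ Comp e) (hq : q ∈ Comp e) (hle : q ≤ p) :
    q ⊓ (p - q) = 0 := by
  refine le_antisymm ?_ (le_inf (rp_comp_nonneg hq) (sub_nonneg.2 hle))
  exact (le_inf inf_le_left (inf_le_right.trans (sub_le_sub_right (rp_comp_le hp) q))).trans
    (rp_mem_comp.mp hq).le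

lemma rp_comp_decomp {p₁ p₂ : α} (hp₁ : p₁ ∈ Comp e) (hp₂ : p₂ ∈ Comp e)
    (hd : p₁ ⊓ p₂ = 0) {q : α} (hq : q ∈ Comp e) (hle : q ≤ p₁ + p₂) :
    q = q ⊓ p₁ + q ⊓ p₂ := by
  have hq0 := rp_comp_nonneg hq
  have h1 : q ≤ q⊓p₁ + q⊓p₂ := by
    have heq : q ⊓ (p₁ + p₂) = q := inf_eq_left.mpr hle
    calc q = q ⊓ (p₁+p₂) := heq.symm
      _ ≤ _ := rp_inf_add_le hq0 (rp_comp_nonneg hp₁) (rp_comp_nonneg hp₂)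
  have h2 : q⊓p₁ + q⊓p₂ ≤ q := by
    have hdisj : (q⊓p₁) ⊓ (q⊓p₂) = 0 :=
      le_antisymm ((inf_le_inf inf_le_right inf_le_right).trans hd.le)
        (le_inf (le_inf hq0 (rp_comp_nonneg hp₁)) (le_inf hq0 (rp_comp_nonneg hp₂)))
    rw [rp_add_eq_sup_of_disj hdisj]; exact sup_le inf_le_left inf_le_left
  exact le_antisymm h1 h2

variable {β : Type*} [Lattice β] [AddCommGroup β]

lemma rp_charge_split {μ : α → β} (hμ : IsChargeOn e μ) {p q : α}
    (hp : p ∈ Comp e) (hq : q ∈ Comp e) (hle : q ≤ p) : μ p = μ q + μ (p - q) := by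
  have h := hμ.2 q (p - q) hq (rp_comp_sub hp hq hle) (rp_comp_q_disj hp hq hle)
  rw [show q + (p - q) = p by abel] at h
  exact h

lemma rp_charge_mono {μ : α → β} [CovariantClass β β (· + ·) (· ≤ ·)]
    (hμ : IsChargeOn e μ) (hpos : ∀ p ∈ Comp e, 0 ≤ μ p) {p q : α}
    (hp : p ∈ Comp e) (hq : q ∈ Comp e) (hle : q ≤ p) : μ q ≤ μ p := by
  rw [rp_charge_split hμ hp hq hle]
  exact le_add_of_nonneg_right (hpos _ (rp_comp_sub hp hq hle))

end AuxComp

section AuxDisjNonneg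
variable {α : Type*} [ConditionallyCompleteLattice α] [AddCommGroup α]
  [CovariantClass α α (· + ·) (· ≤ ·)]

lemma rp_isLUB_disj_nonneg {S : Set α} {s d : α} (hS : S.Nonempty) (hlub : IsLUB S s)
    (hd : 0 ≤ d) (hpos : ∀ x ∈ S, 0 ≤ x) (h : ∀ x ∈ S, x ⊓ d = 0) : s ⊓ d = 0 := by
  have habs : |s| ⊓ d = 0 := by
    refine rp_isLUB_disj hS hlub hd (fun x hx => ?_)
    rw [abs_of_nonneg (hpos x hx)]; exact h x hx
  obtain ⟨x₀, hx₀⟩ := hS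
  rwa [abs_of_nonneg ((hpos x₀ hx₀).trans (hlub.1 hx₀))] at habs

end AuxDisjNonneg

section AuxPBand
set_option linter.unusedSectionVars false
variable {α : Type*} [Lattice α] [AddCommGroup α] [CovariantClass α α (· + ·) (· ≤ ·)]

lemma rp_mem_pBand {f x : α} : x ∈ pBand f ↔ ∀ y, |y| ⊓ |f| = 0 → |x| ⊓ |y| = 0 := by
  unfold pBand disjC
  simp [Set.mem_setOf_eq]

lemma rp_pBand_solid {f x z : α} (h : |x| ≤ |z|) (hz : z ∈ pBand f) : x ∈ pBand f := by
  rw [rp_mem_pBand] at hz ⊢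
  intro y hy
  exact rp_disj_of_le (abs_nonneg x) h (abs_nonneg y) (hz y hy)

lemma rp_pBand_zero {f : α} : (0:α) ∈ pBand f := by
  rw [rp_mem_pBand]
  intro y _
  rw [abs_zero]
  exact inf_eq_left.mpr (abs_nonneg y)

lemma rp_pBand_add {f x y : α} (hx : x ∈ pBand f) (hy : y ∈ pBand f) : x + y ∈ pBand f := by
  rw [rp_mem_pBand] at hx hy ⊢
  intro z hz
  refine rp_disj_of_le (abs_nonneg _) (abs_add_le x y) (abs_nonneg z) ?_
  exact rp_disj_add (abs_nonneg x) (abs_nonneg y) (abs_nonneg z) (hx z hz) (hy z hz)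

lemma rp_pBand_neg {f x : α} (hx : x ∈ pBand f) : -x ∈ pBand f := by
  rw [rp_mem_pBand] at hx ⊢
  intro z hz; rw [abs_neg]; exact hx z hz

lemma rp_pBand_sub {f x y : α} (hx : x ∈ pBand f) (hy : y ∈ pBand f) : x - y ∈ pBand f := by
  rw [sub_eq_add_neg]; exact rp_pBand_add hx (rp_pBand_neg hy)

lemma rp_pBand_mono {f f' : α} (h : |f| ≤ |f'|) : pBand f ⊆ pBand f' := by
  intro x hx
  rw [rp_mem_pBand] at hx ⊢
  intro y hy
  refine hx y ?_
  rw [inf_comm]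
  rw [inf_comm] at hy
  exact rp_disj_of_le (abs_nonneg f) h (abs_nonneg y) hy

end AuxPBand

section AuxPBandCCL
variable {α : Type*} [ConditionallyCompleteLattice α] [AddCommGroup α]
  [CovariantClass α α (· + ·) (· ≤ ·)]

lemma rp_pBand_isLUB {S : Set α} {s : α} {f : α}
    (hS : S.Nonempty) (hlub : IsLUB S s) (h : ∀ x ∈ S, x ∈ pBand f) : s ∈ pBand f := by
  rw [rp_mem_pBand]
  intro y hy
  exact rp_isLUB_disj hS hlub (abs_nonneg y) (fun x hx => (rp_mem_pBand.mp (h x hx)) y hy)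

end AuxPBandCCL

section AuxPBandSmul
variable {α : Type*} [Lattice α] [AddCommGroup α] [CovariantClass α α (· + ·) (· ≤ ·)]
  [Module ℝ α] [PosSMulMono ℝ α]

lemma rp_pBand_smul {f x : α} (r : ℝ) (hx : x ∈ pBand f) : r • x ∈ pBand f := by
  rw [rp_mem_pBand] at hx ⊢
  intro y hy
  have h1 : |r • x| = |r| • |x| := rp_abs_smul r x
  have h2 : |r| • |x| ≤ (⌈|r|⌉₊ : ℕ) • |x| := rp_smul_le_nsmul (abs_nonneg x) (Nat.le_ceil _)
  refine le_antisymm ?_ (le_inf (abs_nonneg _) (abs_nonneg _))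
  calc |r • x| ⊓ |y| ≤ ((⌈|r|⌉₊ : ℕ) • |x|) ⊓ |y| := inf_le_inf_right _ (h1.le.trans h2)
    _ = 0 := rp_disj_nsmul (abs_nonneg x) (abs_nonneg y) (hx y hy) _

end AuxPBandSmul

section AuxCRT
set_option linter.unusedSectionVars false
set_option maxHeartbeats 1000000

variable {E : Type u} {G : Type v}
variable [ConditionallyCompleteLattice E] [AddCommGroup E] [Module ℝ E]
  [CovariantClass E E (· + ·) (· ≤ ·)] [PosSMulMono ℝ E]
variable [ConditionallyCompleteLattice G] [AddCommGroup G] [Module ℝ G]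
  [CovariantClass G G (· + ·) (· ≤ ·)] [PosSMulMono ℝ G]
variable (C : CRT E G)

/-! #### The embedding `j` -/

lemma rpc_j_le_iff {x y : E} : C.j x ≤ C.j y ↔ x ≤ y := by
  constructor
  · intro h
    have h2 : 0 ≤ C.j (y - x) := by rw [map_sub]; exact sub_nonneg.2 h
    exact sub_nonneg.mp ((C.compl.bipos _).mp h2)
  · intro h
    have h2 : 0 ≤ C.j (y - x) := (C.compl.bipos _).mpr (sub_nonneg.2 h)
    rw [map_sub] at h2
    exact sub_nonneg.mp h2

lemma rpc_j_mono {x y : E} (h : x ≤ y) : C.j x ≤ C.j y := (rpc_j_le_iff C).mpr h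

lemma rpc_j_inj : Function.Injective ⇑C.j := fun x y h =>
  le_antisymm ((rpc_j_le_iff C).mp h.le) ((rpc_j_le_iff C).mp h.ge)

lemma rpc_j_inf (x y : E) : C.j (x ⊓ y) = C.j x ⊓ C.j y := by
  have h : x ⊓ y = -((-x) ⊔ (-y)) := by rw [neg_sup, neg_neg, neg_neg]
  rw [h, map_neg, C.compl.latHom, map_neg, map_neg, neg_sup, neg_neg, neg_neg]

lemma rpc_j_abs (x : E) : C.j |x| = |C.j x| := by
  rw [rp_abs_def, rp_abs_def, C.compl.latHom, map_neg]

lemma rpc_j_posPart (x : E) : C.j (x⁺) = (C.j x)⁺ := by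
  rw [posPart_def, posPart_def, C.compl.latHom, map_zero]

lemma rpc_j_negPart (x : E) : C.j (x⁻) = (C.j x)⁻ := by
  rw [negPart_def, negPart_def, C.compl.latHom, map_zero, map_neg]

lemma rpc_j_isLUB {A : Set E} {s : E} (h : IsLUB A s) : IsLUB (⇑C.j '' A) (C.j s) := by
  constructor
  · rintro y ⟨x, hx, rfl⟩
    exact rpc_j_mono C (h.1 hx)
  · intro u hu
    by_contra hcon
    set u' := u ⊓ C.j s with hu'def
    have hu'ub : ∀ x ∈ A, C.j x ≤ u' :=
      fun x hx => le_inf (hu ⟨x, hx, rfl⟩) (rpc_j_mono C (h.1 hx))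
    have hne : ¬ (C.j s ≤ u') := fun hh => hcon (hh.trans inf_le_left)
    have hpos : 0 < C.j s - u' := by
      rcases eq_or_lt_of_le (inf_le_right : u' ≤ C.j s) with he | hl
      · exact absurd he.ge hne
      · exact sub_pos.2 hl
    obtain ⟨x, hx1, hx2⟩ := C.compl.dense _ hpos
    have hxa : ∀ a ∈ A, a ≤ s - x := by
      intro a ha
      have h3 : u' ≤ C.j s - C.j x := by
        have h4 : C.j x + u' ≤ C.j s := le_sub_iff_add_le.mp hx2
        rw [le_sub_iff_add_le, add_comm]
        exact h4
      have h5 : C.j a ≤ C.j (s - x) := by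
        rw [map_sub]; exact (hu'ub a ha).trans h3
      exact (rpc_j_le_iff C).mp h5
    have h6 : s ≤ s - x := h.2 hxa
    have h7 : x ≤ 0 := by
      have := le_sub_iff_add_le.mp h6
      exact (add_le_iff_nonpos_right s).mp this
    have h8 : C.j x ≤ 0 := by
      have := rpc_j_mono C h7
      rwa [map_zero] at this
    exact absurd (hx1.trans_le h8) (lt_irrefl (0:G))

/-! #### The range `R(T)` -/

lemma rpc_T_mono {x y : E} (h : x ≤ y) : C.T x ≤ C.T y := by
  have h2 := C.triple.pos (y - x) (sub_nonneg.2 h)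
  rw [map_sub] at h2
  exact sub_nonneg.mp h2

lemma rpc_R_zero : (0:E) ∈ C.R := ⟨0, map_zero _⟩

lemma rpc_R_e : C.e ∈ C.R := ⟨C.e, C.triple.unitFix⟩

lemma rpc_e_pos : (0:E) < C.e := C.triple.weakUnit.1

lemma rpc_R_add {a b : E} (ha : a ∈ C.R) (hb : b ∈ C.R) : a + b ∈ C.R := by
  obtain ⟨x, rfl⟩ := ha; obtain ⟨y, rfl⟩ := hb
  exact ⟨x + y, map_add _ _ _⟩

lemma rpc_R_neg {a : E} (ha : a ∈ C.R) : -a ∈ C.R := by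
  obtain ⟨x, rfl⟩ := ha; exact ⟨-x, map_neg _ _⟩

lemma rpc_R_sub {a b : E} (ha : a ∈ C.R) (hb : b ∈ C.R) : a - b ∈ C.R := by
  rw [sub_eq_add_neg]; exact rpc_R_add C ha (rpc_R_neg C hb)

lemma rpc_R_smul {a : E} (r : ℝ) (ha : a ∈ C.R) : r • a ∈ C.R := by
  obtain ⟨x, rfl⟩ := ha; exact ⟨r • x, map_smul _ _ _⟩

lemma rpc_R_sup {a b : E} (ha : a ∈ C.R) (hb : b ∈ C.R) : a ⊔ b ∈ C.R :=
  C.triple.rangeSupClosed a b ha hb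

lemma rpc_R_inf {a b : E} (ha : a ∈ C.R) (hb : b ∈ C.R) : a ⊓ b ∈ C.R := by
  have h : a ⊓ b = -((-a) ⊔ (-b)) := by rw [neg_sup, neg_neg, neg_neg]
  rw [h]
  exact rpc_R_neg C (rpc_R_sup C (rpc_R_neg C ha) (rpc_R_neg C hb))

lemma rpc_R_abs {a : E} (ha : a ∈ C.R) : |a| ∈ C.R := by
  rw [rp_abs_def]; exact rpc_R_sup C ha (rpc_R_neg C ha)

lemma rpc_R_posPart {a : E} (ha : a ∈ C.R) : a⁺ ∈ C.R := by
  rw [posPart_def]; exact rpc_R_sup C ha (rpc_R_zero C)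

lemma rpc_R_negPart {a : E} (ha : a ∈ C.R) : a⁻ ∈ C.R := by
  rw [negPart_def]; exact rpc_R_sup C (rpc_R_neg C ha) (rpc_R_zero C)

lemma rpc_R_csSup {A : Set E} (hsub : A ⊆ C.R) (hne : A.Nonempty) (hbdd : BddAbove A) :
    sSup A ∈ C.R :=
  C.triple.rangeDedekind A hsub hne hbdd

lemma rpc_R_csInf {A : Set E} (hsub : A ⊆ C.R) (hne : A.Nonempty) (hbdd : BddBelow A) :
    sInf A ∈ C.R := by
  have hsub' : -A ⊆ C.R := by
    intro x hx
    rw [Set.mem_neg] at hx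
    have := rpc_R_neg C (hsub hx)
    rwa [neg_neg] at this
  have h1 : IsLUB (-A) (sSup (-A)) := isLUB_csSup hne.neg hbdd.neg
  have h2 : IsGLB A (-sSup (-A)) := by
    have := h1.neg
    rwa [neg_neg] at this
  have h3 : sInf A = -sSup (-A) := (isGLB_csInf hne hbdd).unique h2
  rw [h3]
  exact rpc_R_neg C (rpc_R_csSup C hsub' hne.neg hbdd.neg)

/-! #### `sm` basics -/

lemma rpc_Linf_witness {g : E} (hg : g ∈ C.R) :
    ∃ h, h ∈ Set.range ⇑C.T ∧ 0 ≤ h ∧ |g| ≤ h :=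
  ⟨|g|, rpc_R_abs C hg, abs_nonneg g, le_rfl⟩

lemma rpc_j_sm {g f : E} (hw : ∃ h, h ∈ Set.range ⇑C.T ∧ 0 ≤ h ∧ |g| ≤ h) :
    C.j (C.sm g f) = C.mul (C.j g) (C.j f) := by
  unfold CRT.sm
  exact Function.invFun_eq (C.mulClosed g f hw)

lemma rpc_sm_eq {g f x : E} (hw : ∃ h, h ∈ Set.range ⇑C.T ∧ 0 ≤ h ∧ |g| ≤ h)
    (h : C.j x = C.mul (C.j g) (C.j f)) : C.sm g f = x :=
  rpc_j_inj C (by rw [rpc_j_sm C hw, h])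

/-! #### `f`-algebra facts in `G` -/

lemma rpc_mul_zero_left (x : G) : C.mul 0 x = 0 := by
  have h := C.falg.add_left 0 0 x
  rw [add_zero] at h
  exact ((left_eq_add).mp h)

lemma rpc_mul_zero_right (x : G) : C.mul x 0 = 0 := by
  rw [C.falg.comm]; exact rpc_mul_zero_left C x

lemma rpc_mul_add_right (x y z : G) : C.mul x (y + z) = C.mul x y + C.mul x z := by
  rw [C.falg.comm, C.falg.add_left, C.falg.comm y x, C.falg.comm z x]

lemma rpc_mul_neg_right (x y : G) : C.mul x (-y) = -(C.mul x y) := by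
  have h := rpc_mul_add_right C x y (-y)
  rw [add_neg_cancel, rpc_mul_zero_right] at h
  exact (neg_eq_of_add_eq_zero_right h.symm).symm

lemma rpc_mul_sub_right (x y z : G) : C.mul x (y - z) = C.mul x y - C.mul x z := by
  rw [sub_eq_add_neg, rpc_mul_add_right, rpc_mul_neg_right, sub_eq_add_neg]

lemma rpc_mul_sub_left (x y z : G) : C.mul (x - y) z = C.mul x z - C.mul y z := by
  rw [C.falg.comm, rpc_mul_sub_right, C.falg.comm z x, C.falg.comm z y]

lemma rpc_mul_add_left (x y z : G) : C.mul (x + y) z = C.mul x z + C.mul y z :=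
  C.falg.add_left x y z

lemma rpc_mul_mono_right {x y y' : G} (hx : 0 ≤ x) (h : y ≤ y') :
    C.mul x y ≤ C.mul x y' := by
  have h2 : 0 ≤ C.mul x (y' - y) := C.falg.mul_nonneg x _ hx (sub_nonneg.2 h)
  rw [rpc_mul_sub_right] at h2
  exact sub_nonneg.mp h2

lemma rpc_mul_mono_left {x x' y : G} (hy : 0 ≤ y) (h : x ≤ x') :
    C.mul x y ≤ C.mul x' y := by
  rw [C.falg.comm, C.falg.comm x' y]; exact rpc_mul_mono_right C hy h

lemma rpc_mul_nsmul_left (n : ℕ) (x y : G) : C.mul (n • x) y = n • C.mul x y := by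
  induction n with
  | zero => rw [zero_nsmul, zero_nsmul, rpc_mul_zero_left]
  | succ n ih => rw [succ_nsmul, succ_nsmul, rpc_mul_add_left, ih]

lemma rpc_mul_smul_left (r : ℝ) (x y : G) : C.mul (r • x) y = r • C.mul x y :=
  C.falg.smul_left r x y

lemma rpc_mul_smul_right (r : ℝ) (x y : G) : C.mul x (r • y) = r • C.mul x y := by
  rw [C.falg.comm, rpc_mul_smul_left, C.falg.comm]

lemma rpc_mul_w_left (x : G) : C.mul (C.j C.e) x = x := C.falg.one_mul x

lemma rpc_mul_w_right (x : G) : C.mul x (C.j C.e) = x := by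
  rw [C.falg.comm]; exact rpc_mul_w_left C x

lemma rpc_w_nonneg : 0 ≤ C.j C.e :=
  (C.compl.bipos _).mpr (rpc_e_pos C).le

lemma rpc_mul_bdd_disj {x y : G} {n : ℕ} (hx : 0 ≤ x) (hy : 0 ≤ y) (hxy : x ⊓ y = 0)
    (hxb : x ≤ n • (C.j C.e)) : C.mul x y = 0 := by
  have h1 : C.mul x y ⊓ y = 0 := C.falg.disj x y y hxy hy
  have h2 : C.mul x y ≤ n • y := by
    calc C.mul x y ≤ C.mul (n • C.j C.e) y := rpc_mul_mono_left C hy hxb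
      _ = n • C.mul (C.j C.e) y := rpc_mul_nsmul_left C n _ y
      _ = n • y := by rw [rpc_mul_w_left]
  have h3 : C.mul x y ⊓ (n • y) = 0 := by
    rw [inf_comm]
    exact rp_disj_nsmul hy (C.falg.mul_nonneg x y hx hy) (by rwa [inf_comm] at h1) n
  calc C.mul x y = C.mul x y ⊓ (n • y) := (inf_eq_left.mpr h2).symm
    _ = 0 := h3

lemma rpc_mul_comp_absorb {P y : G} (hP : P ∈ Comp (C.j C.e)) (hy : 0 ≤ y)
    (hd : y ⊓ (C.j C.e - P) = 0) : C.mul P y = y := by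
  have h0 : C.mul (C.j C.e - P) y = 0 := by
    refine rpc_mul_bdd_disj C (sub_nonneg.2 (rp_comp_le hP)) hy ?_ (n := 1) ?_
    · rwa [inf_comm] at hd
    · rw [one_nsmul]; exact sub_le_self _ (rp_comp_nonneg hP)
  have h1 := rpc_mul_sub_left C (C.j C.e) P y
  rw [h0, rpc_mul_w_left] at h1
  exact (sub_eq_zero.mp h1.symm).symm
end AuxCRT

section AuxMulR
set_option linter.unusedSectionVars false
set_option maxHeartbeats 1000000

variable {E : Type u} {G : Type v}
variable [ConditionallyCompleteLattice E] [AddCommGroup E] [Module ℝ E]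
  [CovariantClass E E (· + ·) (· ≤ ·)] [PosSMulMono ℝ E]
variable [ConditionallyCompleteLattice G] [AddCommGroup G] [Module ℝ G]
  [CovariantClass G G (· + ·) (· ≤ ·)] [PosSMulMono ℝ G]
variable (C : CRT E G)

/-- Band projection of the unit `w = j e` onto the band generated by `f ≥ 0` in `G`. -/
def rpcPw (f : G) : G := sSup (Set.range fun n : ℕ => (C.j C.e) ⊓ n • f)

lemma rpc_pw_isLUB (f : G) :
    IsLUB (Set.range fun n : ℕ => (C.j C.e) ⊓ n • f) (rpcPw C f) :=
  isLUB_csSup ⟨_, 0, rfl⟩ ⟨C.j C.e, by rintro x ⟨n, rfl⟩; exact inf_le_left⟩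

lemma rpc_pw_le_w (f : G) : rpcPw C f ≤ C.j C.e :=
  (rpc_pw_isLUB C f).2 (by rintro x ⟨n, rfl⟩; exact inf_le_left)

lemma rpc_pw_nonneg {f : G} (hf : 0 ≤ f) : 0 ≤ rpcPw C f := by
  have h : (C.j C.e) ⊓ (0:ℕ) • f = 0 := by
    rw [zero_nsmul]; exact inf_eq_right.mpr (rpc_w_nonneg C)
  have h2 := (rpc_pw_isLUB C f).1 ⟨0, rfl⟩
  simp only at h2
  rwa [h] at h2

lemma rpc_pw_resid {f : G} (hf : 0 ≤ f) : (C.j C.e - rpcPw C f) ⊓ f = 0 :=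
  rp_isLUB_trunc (rpc_w_nonneg C) hf (rpc_pw_isLUB C f)

lemma rpc_pw_band {f d : G} (hf : 0 ≤ f) (hd : 0 ≤ d) (hdf : d ⊓ f = 0) :
    (rpcPw C f) ⊓ d = 0 := by
  refine rp_isLUB_disj_nonneg (hlub := rpc_pw_isLUB C f) (hS := Set.range_nonempty _) (hd := hd) ?_ ?_
  · rintro x ⟨n, rfl⟩; exact le_inf (rpc_w_nonneg C) (nsmul_nonneg hf n)
  · rintro x ⟨n, rfl⟩
    refine rp_disj_of_le (le_inf (rpc_w_nonneg C) (nsmul_nonneg hf n)) inf_le_right hd ?_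
    exact rp_disj_nsmul hf hd (by rwa [inf_comm] at hdf) n

lemma rpc_pw_comp {f : G} (hf : 0 ≤ f) : rpcPw C f ∈ Comp (C.j C.e) := by
  rw [rp_mem_comp]
  exact rpc_pw_band C hf (sub_nonneg.2 (rpc_pw_le_w C f)) (rpc_pw_resid C hf)

lemma rpc_pw_mono {f f' : G} (h : f ≤ f') : rpcPw C f ≤ rpcPw C f' := by
  refine (rpc_pw_isLUB C f).2 ?_
  rintro x ⟨n, rfl⟩
  exact le_trans (inf_le_inf_left _ (nsmul_le_nsmul_right h n)) ((rpc_pw_isLUB C f').1 ⟨n, rfl⟩)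

lemma rpc_pw_zero : rpcPw C (0:G) = 0 := by
  refine le_antisymm ?_ (rpc_pw_nonneg C le_rfl)
  refine csSup_le (Set.range_nonempty _) ?_
  rintro x ⟨n, rfl⟩
  simp only
  rw [smul_zero]
  exact inf_le_right

lemma rpc_sub_inf_eq_posPart (a b : G) : a - a ⊓ b = (a - b)⁺ := by
  rw [sub_inf a b a, sub_self, posPart_def]
  exact sup_comm _ _

lemma rpc_mul_nsmul_right (n : ℕ) (x y : G) : C.mul x (n • y) = n • C.mul x y := by
  rw [C.falg.comm, rpc_mul_nsmul_left, C.falg.comm]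

/-- `R = mul R R` for components of the unit. -/
lemma rpc_mul_comp_idem {P : G} (hP : P ∈ Comp (C.j C.e)) : C.mul P P = P :=
  rpc_mul_comp_absorb C hP (rp_comp_nonneg hP) (rp_mem_comp.mp hP)

/-- Truncation continuity of multiplication: `A·B = sup_k (A ⊓ k w)·B`. -/
lemma rpc_mul_trunc {A B : G} (hA : 0 ≤ A) (hB : 0 ≤ B) :
    IsLUB (Set.range fun k : ℕ => C.mul (A ⊓ k • (C.j C.e)) B) (C.mul A B) := by
  set w := C.j C.e with hw
  have hw0 : (0:G) ≤ w := rpc_w_nonneg C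
  constructor
  · rintro x ⟨k, rfl⟩
    exact rpc_mul_mono_left C hB inf_le_left
  · intro u hu
    set d := C.mul A B - u with hd
    have hkey : ∀ k : ℕ, k • d ≤ C.mul (C.mul A A) B := by
      intro k
      set Ck := (A - k • w)⁺ with hCk
      set Dk := (A - k • w)⁻ with hDk
      have hCk0 : (0:G) ≤ Ck := posPart_nonneg _
      have hDk0 : (0:G) ≤ Dk := negPart_nonneg _
      have hCkA : Ck ≤ A := by
        have h1 : A - k • w ≤ A := sub_le_self A (nsmul_nonneg hw0 k)
        have h2 := posPart_mono h1
        simp only at h2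
        rwa [posPart_eq_self.mpr hA] at h2
      set p := rpcPw C Ck with hp
      have hp0 : (0:G) ≤ p := rpc_pw_nonneg C hCk0
      have hpw : p ≤ w := rpc_pw_le_w C Ck
      have hpC : C.mul p Ck = Ck := by
        refine rpc_mul_comp_absorb C (rpc_pw_comp C hCk0) hCk0 ?_
        rw [inf_comm]
        exact rpc_pw_resid C hCk0
      have hpD : C.mul p Dk = 0 := by
        have hd1 : p ⊓ Dk = 0 :=
          rpc_pw_band C hCk0 hDk0 (by rw [inf_comm]; exact posPart_inf_negPart_eq_zero _)
        exact rpc_mul_bdd_disj C hp0 hDk0 hd1 (n := 1) (by rwa [one_nsmul])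
      have hpA : C.mul p A = k • p + Ck := by
        have h1 : C.mul p (A - k • w) = Ck := by
          have h2 : A - k • w = Ck - Dk := (posPart_sub_negPart _).symm
          rw [h2, rpc_mul_sub_right, hpC, hpD, sub_zero]
        have h3 : C.mul p (A - k • w) = C.mul p A - k • p := by
          rw [rpc_mul_sub_right, rpc_mul_nsmul_right, rpc_mul_w_right]
        rw [h3] at h1
        have := sub_eq_iff_eq_add.mp h1
        rw [this]; abel
      have hCA : k • Ck ≤ C.mul Ck A := by
        have h1 : C.mul Ck A = C.mul Ck (C.mul p A) := by
          have h2 : C.mul Ck p = Ck := by rw [C.falg.comm]; exact hpC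
          calc C.mul Ck A = C.mul (C.mul Ck p) A := by rw [h2]
            _ = C.mul Ck (C.mul p A) := C.falg.assoc _ _ _
        rw [h1, hpA, rpc_mul_add_right, rpc_mul_nsmul_right]
        have h4 : C.mul Ck p = Ck := by rw [C.falg.comm]; exact hpC
        rw [h4]
        exact le_add_of_nonneg_right (C.falg.mul_nonneg _ _ hCk0 hCk0)
      have hdk : d ≤ C.mul Ck B := by
        have h1 : C.mul (A ⊓ k • w) B ≤ u := hu ⟨k, rfl⟩
        have h2 : C.mul A B - C.mul (A ⊓ k • w) B = C.mul Ck B := by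
          rw [← rpc_mul_sub_left, rpc_sub_inf_eq_posPart]
        calc d = C.mul A B - u := rfl
          _ ≤ C.mul A B - C.mul (A ⊓ k • w) B := sub_le_sub_left h1 _
          _ = C.mul Ck B := h2
      calc k • d ≤ k • C.mul Ck B := nsmul_le_nsmul_right hdk k
        _ = C.mul (k • Ck) B := (rpc_mul_nsmul_left C k _ B).symm
        _ ≤ C.mul (C.mul A A) B := rpc_mul_mono_left C hB
            (hCA.trans (rpc_mul_mono_left C hA hCkA))
    have hd0 : d ≤ 0 := rp_arch hkey
    exact sub_nonpos.mp hd0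

lemma rpc_mul_posPart_negPart (x : G) : C.mul x⁺ x⁻ = 0 := by
  have hlub := rpc_mul_trunc C (posPart_nonneg x) (negPart_nonneg x)
  have hz : ∀ k : ℕ, C.mul (x⁺ ⊓ k • (C.j C.e)) x⁻ = 0 := by
    intro k
    refine rpc_mul_bdd_disj C (le_inf (posPart_nonneg x) (nsmul_nonneg (rpc_w_nonneg C) k))
      (negPart_nonneg x) ?_ (n := k) inf_le_right
    exact rp_disj_of_le (le_inf (posPart_nonneg x) (nsmul_nonneg (rpc_w_nonneg C) k))
      inf_le_left (negPart_nonneg x) (posPart_inf_negPart_eq_zero x)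
  refine le_antisymm ?_ (C.falg.mul_nonneg _ _ (posPart_nonneg x) (negPart_nonneg x))
  refine hlub.2 ?_
  rintro y ⟨k, rfl⟩
  simp only
  rw [hz k]

end AuxMulR

section AuxSq
set_option linter.unusedSectionVars false
set_option maxHeartbeats 1600000

variable {E : Type u} {G : Type v}
variable [ConditionallyCompleteLattice E] [AddCommGroup E] [Module ℝ E]
  [CovariantClass E E (· + ·) (· ≤ ·)] [PosSMulMono ℝ E]
variable [ConditionallyCompleteLattice G] [AddCommGroup G] [Module ℝ G]
  [CovariantClass G G (· + ·) (· ≤ ·)] [PosSMulMono ℝ G]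
variable (C : CRT E G)

lemma rpc_sq_nonneg (x : G) : 0 ≤ C.mul x x := by
  obtain ⟨a, b, ha, hb, hab, hx⟩ : ∃ a b : G, 0 ≤ a ∧ 0 ≤ b ∧ C.mul a b = 0 ∧ x = a - b :=
    ⟨x⁺, x⁻, posPart_nonneg x, negPart_nonneg x, rpc_mul_posPart_negPart C x,
      (posPart_sub_negPart x).symm⟩
  subst hx
  have hba : C.mul b a = 0 := by rw [C.falg.comm]; exact hab
  have hexp : C.mul (a - b) (a - b) = C.mul a a + C.mul b b := by
    rw [rpc_mul_sub_left, rpc_mul_sub_right, rpc_mul_sub_right, hab, hba, sub_zero,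
      zero_sub, sub_neg_eq_add]
  rw [hexp]
  exact add_nonneg (C.falg.mul_nonneg a a ha ha) (C.falg.mul_nonneg b b hb hb)

lemma rpc_mul_parts (x y : G) :
    C.mul x y = C.mul x⁺ y⁺ - C.mul x⁺ y⁻ - (C.mul x⁻ y⁺ - C.mul x⁻ y⁻) := by
  conv_lhs => rw [← posPart_sub_negPart x, ← posPart_sub_negPart y]
  rw [rpc_mul_sub_left, rpc_mul_sub_right, rpc_mul_sub_right]

lemma rpc_abs_mul_le (x y : G) : |C.mul x y| ≤ C.mul |x| |y| := by
  have h := rpc_mul_parts C x y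
  have hP : ∀ a b : G, 0 ≤ a → 0 ≤ b → |C.mul a b| = C.mul a b :=
    fun a b ha hb => abs_of_nonneg (C.falg.mul_nonneg a b ha hb)
  have habs : |C.mul x y| ≤
      C.mul x⁺ y⁺ + C.mul x⁺ y⁻ + (C.mul x⁻ y⁺ + C.mul x⁻ y⁻) := by
    rw [h]
    calc |C.mul x⁺ y⁺ - C.mul x⁺ y⁻ - (C.mul x⁻ y⁺ - C.mul x⁻ y⁻)|
        ≤ |C.mul x⁺ y⁺ - C.mul x⁺ y⁻| + |C.mul x⁻ y⁺ - C.mul x⁻ y⁻| := rp_abs_sub_le _ _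
      _ ≤ (|C.mul x⁺ y⁺| + |C.mul x⁺ y⁻|) + (|C.mul x⁻ y⁺| + |C.mul x⁻ y⁻|) :=
          add_le_add (rp_abs_sub_le _ _) (rp_abs_sub_le _ _)
      _ = C.mul x⁺ y⁺ + C.mul x⁺ y⁻ + (C.mul x⁻ y⁺ + C.mul x⁻ y⁻) := by
          rw [hP _ _ (posPart_nonneg x) (posPart_nonneg y),
            hP _ _ (posPart_nonneg x) (negPart_nonneg y),
            hP _ _ (negPart_nonneg x) (posPart_nonneg y),
            hP _ _ (negPart_nonneg x) (negPart_nonneg y)]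
  have hrhs : C.mul |x| |y| =
      C.mul x⁺ y⁺ + C.mul x⁺ y⁻ + (C.mul x⁻ y⁺ + C.mul x⁻ y⁻) := by
    conv_lhs => rw [← posPart_add_negPart x, ← posPart_add_negPart y]
    rw [rpc_mul_add_left, rpc_mul_add_right, rpc_mul_add_right]
  rw [hrhs]
  exact habs

lemma rpc_mul_w_w : C.mul (C.j C.e) (C.j C.e) = C.j C.e := rpc_mul_w_left C _

lemma rpc_sq_expand (A : G) (lam : ℝ) :
    C.mul (A - lam • (C.j C.e)) (A - lam • (C.j C.e)) =
      C.mul A A - (2*lam) • A + (lam^2) • (C.j C.e) := by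
  have e1 : C.mul A (lam • C.j C.e) = lam • A := by
    rw [rpc_mul_smul_right, rpc_mul_w_right]
  have e2 : C.mul (lam • C.j C.e) A = lam • A := by
    rw [rpc_mul_smul_left, rpc_mul_w_left]
  have e3 : C.mul (lam • C.j C.e) (lam • C.j C.e) = (lam^2) • C.j C.e := by
    rw [rpc_mul_smul_left, rpc_mul_smul_right, rpc_mul_w_left, smul_smul, ← sq]
  have h2 : (2*lam) • A = lam • A + lam • A := by rw [two_mul, add_smul]
  rw [rpc_mul_sub_left, rpc_mul_sub_right, rpc_mul_sub_right, e1, e2, e3, h2]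
  abel

lemma rpc_mul_comp_sq {R : G} (hRR : C.mul R R = R) (X : G) :
    C.mul R (C.mul X X) = C.mul (C.mul R X) (C.mul R X) := by
  have h1 : C.mul (C.mul R X) (C.mul R X) = C.mul R (C.mul X (C.mul R X)) :=
    C.falg.assoc R X (C.mul R X)
  have h2 : C.mul X (C.mul R X) = C.mul R (C.mul X X) := by
    calc C.mul X (C.mul R X) = C.mul (C.mul X R) X := (C.falg.assoc X R X).symm
      _ = C.mul (C.mul R X) X := by rw [C.falg.comm X R]
      _ = C.mul R (C.mul X X) := C.falg.assoc R X X
  rw [h1, h2]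
  conv_rhs => rw [← C.falg.assoc, hRR]

lemma rpc_mul_sum_left {ι : Type*} (s : Finset ι) (f : ι → G) (y : G) :
    C.mul (∑ i ∈ s, f i) y = ∑ i ∈ s, C.mul (f i) y := by
  classical
  induction s using Finset.induction_on with
  | empty => rw [Finset.sum_empty, Finset.sum_empty, rpc_mul_zero_left]
  | insert _ _ h ih => rw [Finset.sum_insert h, Finset.sum_insert h, rpc_mul_add_left, ih]

lemma rpc_sq_le_of_ub_bdd {A u : G} {N : ℕ} (hA : 0 ≤ A) (hAb : A ≤ N • (C.j C.e))
    (hu : ∀ lam : ℝ, 0 ≤ lam → (2*lam) • A - (lam^2) • (C.j C.e) ≤ u) :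
    C.mul A A ≤ u := by
  set w := C.j C.e with hwdef
  have hw0 : (0:G) ≤ w := rpc_w_nonneg C
  have hu0 : (0:G) ≤ u := by
    have := hu 0 le_rfl
    simpa using this
  have main : ∀ K : ℕ, 1 ≤ K → C.mul A A - u ≤ (((N:ℝ)/K)^2) • w := by
    intro K hK
    have hKpos : (0:ℝ) < K := by exact_mod_cast hK
    set δ := (N:ℝ)/K with hδ
    have hδ0 : 0 ≤ δ := div_nonneg (Nat.cast_nonneg N) hKpos.le
    set lam : ℕ → ℝ := fun i => i * δ with hlam
    have hlam0 : ∀ i, 0 ≤ lam i := fun i => mul_nonneg (Nat.cast_nonneg i) hδ0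
    set Cf : ℕ → G := fun i => (A - (lam i) • w)⁺ with hCf
    set P : ℕ → G := fun i => rpcPw C (Cf i) with hP
    have hCf0 : ∀ i, 0 ≤ Cf i := fun i => posPart_nonneg _
    have hPcomp : ∀ i, P i ∈ Comp w := fun i => rpc_pw_comp C (hCf0 i)
    have hlamle : ∀ i : ℕ, lam i ≤ lam (i+1) := by
      intro i
      show (i:ℝ) * δ ≤ ((i+1:ℕ):ℝ) * δ
      push_cast
      nlinarith [hδ0]
    have hPmono : ∀ i, P (i+1) ≤ P i := by
      intro i
      exact rpc_pw_mono C (posPart_mono (sub_le_sub_left (rp_smul_le_smul (hlamle i) hw0) A))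
    have hPK : P K = 0 := by
      have h1 : lam K = (N:ℝ) := by
        show (K:ℝ) * δ = (N:ℝ)
        rw [hδ]
        field_simp
      have h2 : Cf K = 0 := by
        show (A - lam K • w)⁺ = 0
        rw [posPart_eq_zero, h1, Nat.cast_smul_eq_nsmul ℝ N w]
        exact sub_nonpos.mpr hAb
      show rpcPw C (Cf K) = 0
      rw [h2]
      exact rpc_pw_zero C
    set Rf : ℕ → G := fun i => P i - P (i+1) with hRf
    have hRcomp : ∀ i, Rf i ∈ Comp w := fun i =>
      rp_comp_sub (hPcomp i) (hPcomp (i+1)) (hPmono i)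
    have hR0 : ∀ i, 0 ≤ Rf i := fun i => rp_comp_nonneg (hRcomp i)
    have hmulRD : ∀ i, C.mul (Rf i) ((A - lam i • w)⁻) = 0 := by
      intro i
      have hdisj : Rf i ⊓ (A - lam i • w)⁻ = 0 := by
        refine rp_disj_of_le (a := P i) (hR0 i) ?_ (negPart_nonneg _) ?_
        · show P i - P (i+1) ≤ P i
          exact sub_le_self _ (rp_comp_nonneg (hPcomp (i+1)))
        · exact rpc_pw_band C (hCf0 i) (negPart_nonneg _)
            (by rw [inf_comm]; exact posPart_inf_negPart_eq_zero _)
      refine rpc_mul_bdd_disj C (hR0 i) (negPart_nonneg _) hdisj (n := 1) ?_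
      rw [one_nsmul]
      exact rp_comp_le (hRcomp i)
    have hmulRA_lower : ∀ i, C.mul (Rf i) (A - lam i • w) = C.mul (Rf i) (Cf i) := by
      intro i
      have hsp : C.mul (Rf i) (A - lam i • w) =
          C.mul (Rf i) (Cf i) - C.mul (Rf i) ((A - lam i • w)⁻) := by
        conv_lhs => rw [show A - lam i • w = Cf i - (A - lam i • w)⁻ from
          (posPart_sub_negPart _).symm]
        rw [rpc_mul_sub_right]
      rw [hsp, hmulRD i, sub_zero]
    have hY0 : ∀ i, 0 ≤ C.mul (Rf i) (A - lam i • w) := by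
      intro i
      rw [hmulRA_lower i]
      exact C.falg.mul_nonneg _ _ (hR0 i) (hCf0 i)
    have hYle : ∀ i, C.mul (Rf i) (A - lam (i+1) • w) ≤ 0 := by
      intro i
      have hC1 : C.mul (Rf i) (Cf (i+1)) = 0 := by
        have hdisj : Rf i ⊓ Cf (i+1) = 0 := by
          refine rp_disj_of_le (a := w - P (i+1)) (hR0 i) ?_ (hCf0 (i+1)) ?_
          · show P i - P (i+1) ≤ w - P (i+1)
            exact sub_le_sub_right (rp_comp_le (hPcomp i)) _
          · exact rpc_pw_resid C (hCf0 (i+1))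
        refine rpc_mul_bdd_disj C (hR0 i) (hCf0 (i+1)) hdisj (n := 1) ?_
        rw [one_nsmul]
        exact rp_comp_le (hRcomp i)
      have hsplit : C.mul (Rf i) (A - lam (i+1) • w) =
          C.mul (Rf i) (Cf (i+1)) - C.mul (Rf i) ((A - lam (i+1) • w)⁻) := by
        conv_lhs => rw [show A - lam (i+1) • w = Cf (i+1) - (A - lam (i+1) • w)⁻ from
          (posPart_sub_negPart _).symm]
        rw [rpc_mul_sub_right]
      rw [hsplit, hC1, zero_sub]
      exact neg_nonpos.mpr (C.falg.mul_nonneg _ _ (hR0 i) (negPart_nonneg _))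
    have hYδ : ∀ i, C.mul (Rf i) (A - lam i • w) ≤ δ • Rf i := by
      intro i
      have h1 := hYle i
      have hll : lam (i+1) • w = lam i • w + δ • w := by
        have : lam (i+1) = lam i + δ := by
          show ((i+1:ℕ):ℝ) * δ = (i:ℝ) * δ + δ
          push_cast
          ring
        rw [this, add_smul]
      have h2 : C.mul (Rf i) (A - lam (i+1) • w) =
          C.mul (Rf i) (A - lam i • w) - δ • Rf i := by
        have hAA : A - lam (i+1) • w = (A - lam i • w) - δ • w := by
          rw [hll]; abel
        rw [hAA, rpc_mul_sub_right, rpc_mul_smul_right, rpc_mul_w_right]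
      rw [h2] at h1
      exact sub_nonpos.mp h1
    have hpiece : ∀ i, C.mul (Rf i) (C.mul A A - u) ≤ (δ^2) • Rf i := by
      intro i
      have hle1 : C.mul A A - u ≤ C.mul (A - lam i • w) (A - lam i • w) := by
        rw [rpc_sq_expand]
        have h3 : C.mul A A - u ≤ C.mul A A - ((2*lam i) • A - (lam i^2) • w) :=
          sub_le_sub_left (hu (lam i) (hlam0 i)) _
        calc C.mul A A - u ≤ _ := h3
          _ = C.mul A A - (2*lam i) • A + (lam i^2) • w := by abel
      have hmono : C.mul (Rf i) (C.mul A A - u) ≤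
          C.mul (Rf i) (C.mul (A - lam i • w) (A - lam i • w)) :=
        rpc_mul_mono_right C (hR0 i) hle1
      have hcompsq := rpc_mul_comp_sq C (rpc_mul_comp_idem C (hRcomp i)) (A - lam i • w)
      have hfin : C.mul (C.mul (Rf i) (A - lam i • w)) (C.mul (Rf i) (A - lam i • w)) ≤
          (δ^2) • Rf i := by
        calc C.mul (C.mul (Rf i) (A - lam i • w)) (C.mul (Rf i) (A - lam i • w))
            ≤ C.mul (C.mul (Rf i) (A - lam i • w)) (δ • Rf i) :=
              rpc_mul_mono_right C (hY0 i) (hYδ i)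
          _ ≤ C.mul (δ • Rf i) (δ • Rf i) :=
              rpc_mul_mono_left C (smul_nonneg hδ0 (hR0 i)) (hYδ i)
          _ = (δ^2) • Rf i := by
              rw [rpc_mul_smul_left, rpc_mul_smul_right, rpc_mul_comp_idem C (hRcomp i),
                smul_smul, ← sq]
      calc C.mul (Rf i) (C.mul A A - u) ≤ _ := hmono
        _ = _ := hcompsq
        _ ≤ (δ^2) • Rf i := hfin
    have htail : C.mul (w - P 0) (C.mul A A - u) ≤ 0 := by
      have hC0A : Cf 0 = A := by
        show (A - lam 0 • w)⁺ = A
        have hl0 : lam 0 = 0 := by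
          show ((0:ℕ):ℝ) * δ = 0
          simp
        rw [hl0, zero_smul, sub_zero]
        exact posPart_eq_self.mpr hA
      have hwPA : C.mul (w - P 0) A = 0 := by
        have hdisj : (w - P 0) ⊓ A = 0 := by
          have hr : (w - P 0) ⊓ Cf 0 = 0 := rpc_pw_resid C (hCf0 0)
          rw [hC0A] at hr
          exact hr
        refine rpc_mul_bdd_disj C (sub_nonneg.2 (rpc_pw_le_w C _)) hA hdisj (n := 1) ?_
        rw [one_nsmul]
        exact sub_le_self _ (rpc_pw_nonneg C (hCf0 0))
      have h1 : C.mul (w - P 0) (C.mul A A) = 0 := by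
        have h2 := C.falg.assoc (w - P 0) A A
        rw [hwPA, rpc_mul_zero_left] at h2
        exact h2.symm
      rw [rpc_mul_sub_right, h1, zero_sub]
      exact neg_nonpos.mpr (C.falg.mul_nonneg _ _ (sub_nonneg.2 (rpc_pw_le_w C _)) hu0)
    have hsum : ∑ i ∈ Finset.range K, Rf i = P 0 := by
      have := Finset.sum_range_sub' P K
      rw [hPK, sub_zero] at this
      exact this
    have hdecomp : w = (w - P 0) + ∑ i ∈ Finset.range K, Rf i := by
      rw [hsum]; abel
    have hmulsum : C.mul (∑ i ∈ Finset.range K, Rf i) (C.mul A A - u) ≤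
        (δ^2) • (∑ i ∈ Finset.range K, Rf i) := by
      rw [Finset.smul_sum, rpc_mul_sum_left]
      exact rp_sum_le_sum _ (fun i _ => hpiece i)
    calc C.mul A A - u = C.mul w (C.mul A A - u) := (rpc_mul_w_left C _).symm
      _ = C.mul (w - P 0) (C.mul A A - u) +
          C.mul (∑ i ∈ Finset.range K, Rf i) (C.mul A A - u) := by
          conv_lhs => rw [hdecomp]
          rw [rpc_mul_add_left]
      _ ≤ 0 + (δ^2) • (∑ i ∈ Finset.range K, Rf i) := add_le_add htail hmulsum
      _ = (δ^2) • (P 0) := by rw [zero_add, hsum]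
      _ ≤ (δ^2) • w := smul_le_smul_of_nonneg_left (rpc_pw_le_w C _) (by positivity)
  have harch : ∀ n : ℕ, n • (C.mul A A - u) ≤ ((N:ℝ)^2) • w := by
    intro n
    rcases Nat.eq_zero_or_pos n with rfl | hn
    · rw [zero_nsmul]
      exact smul_nonneg (by positivity) hw0
    · have h1 := main n hn
      have h2 : n • (C.mul A A - u) ≤ n • ((((N:ℝ)/n)^2) • w) := nsmul_le_nsmul_right h1 n
      have h3 : n • ((((N:ℝ)/n)^2) • w) = ((n:ℝ) * ((N:ℝ)/n)^2) • w := by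
        rw [← Nat.cast_smul_eq_nsmul ℝ n, smul_smul]
      have hn' : (1:ℝ) ≤ (n:ℝ) := by exact_mod_cast hn
      have h4 : ((n:ℝ) * ((N:ℝ)/n)^2) ≤ (N:ℝ)^2 := by
        have h5 : (n:ℝ) * ((N:ℝ)/n)^2 = (N:ℝ)^2/(n:ℝ) := by
          field_simp
        rw [h5]
        exact div_le_self (by positivity) hn'
      calc n • (C.mul A A - u) ≤ _ := h2
        _ = _ := h3
        _ ≤ ((N:ℝ)^2) • w := rp_smul_le_smul h4 hw0
  exact sub_nonpos.mp (rp_arch harch)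

end AuxSq

section AuxLemmaM
set_option linter.unusedSectionVars false
set_option maxHeartbeats 1600000

variable {E : Type u} {G : Type v}
variable [ConditionallyCompleteLattice E] [AddCommGroup E] [Module ℝ E]
  [CovariantClass E E (· + ·) (· ≤ ·)] [PosSMulMono ℝ E]
variable [ConditionallyCompleteLattice G] [AddCommGroup G] [Module ℝ G]
  [CovariantClass G G (· + ·) (· ≤ ·)] [PosSMulMono ℝ G]
variable (C : CRT E G)

lemma rpc_sq_isLUB {A : G} (hA : 0 ≤ A) :
    IsLUB {x : G | ∃ lam : ℝ, 0 ≤ lam ∧ x = (2*lam) • A - (lam^2) • (C.j C.e)}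
      (C.mul A A) := by
  have hw0 : (0:G) ≤ C.j C.e := rpc_w_nonneg C
  constructor
  · rintro x ⟨lam, hlam, rfl⟩
    have h := rpc_sq_nonneg C (A - lam • (C.j C.e))
    rw [rpc_sq_expand] at h
    have h2 : (2*lam)•A - (lam^2)•(C.j C.e) ≤ (2*lam)•A - (lam^2)•(C.j C.e) +
        (C.mul A A - (2*lam)•A + (lam^2)•(C.j C.e)) := le_add_of_nonneg_right h
    have h3 : (2*lam)•A - (lam^2)•(C.j C.e) +
        (C.mul A A - (2*lam)•A + (lam^2)•(C.j C.e)) = C.mul A A := by abel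
    exact h2.trans_eq h3
  · intro u hu
    have hbk : ∀ k : ℕ, C.mul (A ⊓ k • (C.j C.e)) (A ⊓ k • (C.j C.e)) ≤ u := by
      intro k
      refine rpc_sq_le_of_ub_bdd C (le_inf hA (nsmul_nonneg hw0 k)) inf_le_right ?_
      intro lam hlam
      refine le_trans ?_ (hu ⟨lam, hlam, rfl⟩)
      exact sub_le_sub_right (smul_le_smul_of_nonneg_left inf_le_left (by linarith)) _
    have hjk : ∀ j k : ℕ, C.mul (A ⊓ j • (C.j C.e)) (A ⊓ k • (C.j C.e)) ≤ u := by
      intro j k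
      have h1 : A ⊓ j•(C.j C.e) ≤ A ⊓ (max j k)•(C.j C.e) :=
        inf_le_inf_left _ (nsmul_le_nsmul_left hw0 (le_max_left j k))
      have h2 : A ⊓ k•(C.j C.e) ≤ A ⊓ (max j k)•(C.j C.e) :=
        inf_le_inf_left _ (nsmul_le_nsmul_left hw0 (le_max_right j k))
      calc C.mul (A ⊓ j•(C.j C.e)) (A ⊓ k•(C.j C.e))
          ≤ C.mul (A ⊓ (max j k)•(C.j C.e)) (A ⊓ k•(C.j C.e)) :=
            rpc_mul_mono_left C (le_inf hA (nsmul_nonneg hw0 k)) h1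
        _ ≤ C.mul (A ⊓ (max j k)•(C.j C.e)) (A ⊓ (max j k)•(C.j C.e)) :=
            rpc_mul_mono_right C (le_inf hA (nsmul_nonneg hw0 (max j k))) h2
        _ ≤ u := hbk (max j k)
    have hk : ∀ k : ℕ, C.mul A (A ⊓ k • (C.j C.e)) ≤ u := by
      intro k
      have hlub := rpc_mul_trunc C hA (le_inf hA (nsmul_nonneg hw0 k))
      refine hlub.2 ?_
      rintro y ⟨j, rfl⟩
      exact hjk j k
    have hlub2 := rpc_mul_trunc C hA hA
    refine hlub2.2 ?_
    rintro y ⟨k, rfl⟩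
    simp only
    rw [C.falg.comm]
    exact hk k

lemma rpc_sm_sq_mem {a : E} (ha : a ∈ C.R) (ha0 : 0 ≤ a) : C.sm a a ∈ C.R := by
  set SE : Set E := {x : E | ∃ lam : ℝ, 0 ≤ lam ∧ x = (2*lam) • a - (lam^2) • C.e}
    with hSE
  have hsub : SE ⊆ C.R := by
    rintro x ⟨lam, hlam, rfl⟩
    exact rpc_R_sub C (rpc_R_smul C _ ha) (rpc_R_smul C _ (rpc_R_e C))
  have hne : SE.Nonempty := ⟨(2*(0:ℝ)) • a - ((0:ℝ)^2) • C.e, 0, le_rfl, rfl⟩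
  have hwit := rpc_Linf_witness C ha
  have hjsm : C.j (C.sm a a) = C.mul (C.j a) (C.j a) := rpc_j_sm C hwit
  have hGlub := rpc_sq_isLUB C (A := C.j a) ((C.compl.bipos a).mpr ha0)
  have hjimage : ⇑C.j '' SE =
      {x : G | ∃ lam : ℝ, 0 ≤ lam ∧ x = (2*lam) • (C.j a) - (lam^2) • (C.j C.e)} := by
    ext x
    constructor
    · rintro ⟨y, ⟨lam, hlam, rfl⟩, rfl⟩
      exact ⟨lam, hlam, by rw [map_sub, map_smul, map_smul]⟩
    · rintro ⟨lam, hlam, rfl⟩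
      exact ⟨(2*lam) • a - (lam^2) • C.e, ⟨lam, hlam, rfl⟩,
        by rw [map_sub, map_smul, map_smul]⟩
  have hbdd : BddAbove SE := by
    refine ⟨C.sm a a, ?_⟩
    rintro x ⟨lam, hlam, rfl⟩
    have h1 : C.j ((2*lam) • a - (lam^2) • C.e) ≤ C.j (C.sm a a) := by
      rw [hjsm, map_sub, map_smul, map_smul]
      exact hGlub.1 ⟨lam, hlam, rfl⟩
    exact (rpc_j_le_iff C).mp h1
  have hclub : IsLUB SE (sSup SE) := isLUB_csSup hne hbdd
  have hjlub := rpc_j_isLUB C hclub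
  rw [hjimage] at hjlub
  have heq : C.sm a a = sSup SE := rpc_sm_eq C hwit (hjlub.unique hGlub)
  rw [heq]
  exact rpc_R_csSup C hsub hne hbdd

lemma rpc_sm_mem_nonneg {a b : E} (ha : a ∈ C.R) (hb : b ∈ C.R) (ha0 : 0 ≤ a)
    (hb0 : 0 ≤ b) : C.sm a b ∈ C.R := by
  have hident : C.sm a b = (2⁻¹ : ℝ) • (C.sm (a+b) (a+b) - C.sm a a - C.sm b b) := by
    refine rpc_sm_eq C (rpc_Linf_witness C ha) ?_
    rw [map_smul, map_sub, map_sub, rpc_j_sm C (rpc_Linf_witness C (rpc_R_add C ha hb)),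
      rpc_j_sm C (rpc_Linf_witness C ha), rpc_j_sm C (rpc_Linf_witness C hb), map_add]
    have hexp : C.mul (C.j a + C.j b) (C.j a + C.j b) =
        C.mul (C.j a) (C.j a) + C.mul (C.j a) (C.j b) +
          (C.mul (C.j a) (C.j b) + C.mul (C.j b) (C.j b)) := by
      rw [rpc_mul_add_left, rpc_mul_add_right, rpc_mul_add_right, C.falg.comm (C.j b) (C.j a)]
    rw [hexp]
    have h2 : C.mul (C.j a) (C.j a) + C.mul (C.j a) (C.j b) +
        (C.mul (C.j a) (C.j b) + C.mul (C.j b) (C.j b)) - C.mul (C.j a) (C.j a) -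
          C.mul (C.j b) (C.j b) = (2:ℝ) • C.mul (C.j a) (C.j b) := by
      rw [two_smul]
      abel
    rw [h2, smul_smul]
    norm_num
  rw [hident]
  refine rpc_R_smul C _ (rpc_R_sub C (rpc_R_sub C ?_ ?_) ?_)
  · exact rpc_sm_sq_mem C (rpc_R_add C ha hb) (add_nonneg ha0 hb0)
  · exact rpc_sm_sq_mem C ha ha0
  · exact rpc_sm_sq_mem C hb hb0

/-- Lemma M: `R(T)` is closed under multiplication. -/
lemma rpc_sm_mem {a b : E} (ha : a ∈ C.R) (hb : b ∈ C.R) : C.sm a b ∈ C.R := by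
  have hident : C.sm a b = C.sm a⁺ b⁺ - C.sm a⁺ b⁻ - (C.sm a⁻ b⁺ - C.sm a⁻ b⁻) := by
    refine rpc_sm_eq C (rpc_Linf_witness C ha) ?_
    rw [map_sub, map_sub, map_sub,
      rpc_j_sm C (rpc_Linf_witness C (rpc_R_posPart C ha)),
      rpc_j_sm C (rpc_Linf_witness C (rpc_R_posPart C ha)),
      rpc_j_sm C (rpc_Linf_witness C (rpc_R_negPart C ha)),
      rpc_j_sm C (rpc_Linf_witness C (rpc_R_negPart C ha)),
      rpc_j_posPart, rpc_j_negPart, rpc_j_posPart, rpc_j_negPart]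
    exact (rpc_mul_parts C _ _).symm
  rw [hident]
  have hap := rpc_R_posPart C ha
  have han := rpc_R_negPart C ha
  have hbp := rpc_R_posPart C hb
  have hbn := rpc_R_negPart C hb
  exact rpc_R_sub C (rpc_R_sub C
      (rpc_sm_mem_nonneg C hap hbp (posPart_nonneg a) (posPart_nonneg b))
      (rpc_sm_mem_nonneg C hap hbn (posPart_nonneg a) (negPart_nonneg b)))
    (rpc_R_sub C
      (rpc_sm_mem_nonneg C han hbp (negPart_nonneg a) (posPart_nonneg b))
      (rpc_sm_mem_nonneg C han hbn (negPart_nonneg a) (negPart_nonneg b)))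

lemma rpc_abs_sm_le {g x y : E} (hg : g ∈ C.R) (hxy : |x| ≤ y) :
    |C.sm g x| ≤ C.sm |g| y := by
  refine (rpc_j_le_iff C).mp ?_
  rw [rpc_j_abs, rpc_j_sm C (rpc_Linf_witness C hg),
    rpc_j_sm C (rpc_Linf_witness C (rpc_R_abs C hg))]
  calc |C.mul (C.j g) (C.j x)| ≤ C.mul |C.j g| |C.j x| := rpc_abs_mul_le C _ _
    _ ≤ C.mul |C.j g| (C.j y) := rpc_mul_mono_right C (abs_nonneg _)
        (by rw [← rpc_j_abs]; exact rpc_j_mono C hxy)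
    _ = C.mul (C.j |g|) (C.j y) := by rw [rpc_j_abs]

lemma rpc_sm_pBand {g x f : E} (hg : g ∈ C.R) (hx : x ∈ pBand f) :
    C.sm g x ∈ pBand f := by
  rw [rp_mem_pBand] at hx ⊢
  intro y hy
  have hj : C.j (|C.sm g x| ⊓ |y|) = 0 → |C.sm g x| ⊓ |y| = 0 :=
    fun h => rpc_j_inj C (by rw [h, map_zero])
  apply hj
  rw [rpc_j_inf, rpc_j_abs, rpc_j_abs, rpc_j_sm C (rpc_Linf_witness C hg)]
  have hd : |C.j x| ⊓ |C.j y| = 0 := by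
    rw [← rpc_j_abs, ← rpc_j_abs, ← rpc_j_inf, hx y hy, map_zero]
  refine le_antisymm ?_ (le_inf (abs_nonneg _) (abs_nonneg _))
  calc |C.mul (C.j g) (C.j x)| ⊓ |C.j y|
      ≤ (C.mul |C.j x| |C.j g|) ⊓ |C.j y| := inf_le_inf_right _
        ((rpc_abs_mul_le C _ _).trans_eq (C.falg.comm _ _))
    _ = 0 := C.falg.disj |C.j x| |C.j y| |C.j g| hd (abs_nonneg _)
  
lemma rpc_sm_add_right {g x y : E} (hg : g ∈ C.R) :
    C.sm g (x + y) = C.sm g x + C.sm g y := by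
  refine rpc_sm_eq C (rpc_Linf_witness C hg) ?_
  rw [map_add, rpc_j_sm C (rpc_Linf_witness C hg), rpc_j_sm C (rpc_Linf_witness C hg),
    map_add, rpc_mul_add_right]

lemma rpc_sm_zero_right {g : E} (hg : g ∈ C.R) : C.sm g 0 = 0 := by
  refine rpc_sm_eq C (rpc_Linf_witness C hg) ?_
  rw [map_zero, rpc_mul_zero_right]

end AuxLemmaM

section AuxCharge
set_option linter.unusedSectionVars false
set_option maxHeartbeats 1600000

variable {α : Type*} [ConditionallyCompleteLattice α] [AddCommGroup α]
  [CovariantClass α α (· + ·) (· ≤ ·)] {e : α}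

lemma rp_le_csInf_add {A B : Set α} {c : α} (hA : A.Nonempty) (hB : B.Nonempty)
    (h : ∀ x ∈ A, ∀ y ∈ B, c ≤ x + y) : c ≤ sInf A + sInf B := by
  have h1 : ∀ x ∈ A, c - sInf B ≤ x := by
    intro x hx
    rw [sub_le_comm]
    exact le_csInf hB (fun y hy => by rw [sub_le_comm]; exact sub_le_iff_le_add.mpr (h x hx y hy))
  exact sub_le_iff_le_add.mp (le_csInf hA h1)

/-- The defining set for `chSupAt`/`chInfAt`. -/
def chSet (e : α) (μ ν : α → α) (p : α) : Set α :=
  {v | ∃ q, q ∈ Comp e ∧ q ≤ p ∧ v = μ q + ν (p - q)}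

lemma rp_chSupAt_eq (μ ν : α → α) (p : α) : chSupAt e μ ν p = sSup (chSet e μ ν p) := rfl

lemma rp_chInfAt_eq (μ ν : α → α) (p : α) : chInfAt e μ ν p = sInf (chSet e μ ν p) := rfl

lemma rp_chargeAbs_eq (μ : α → α) (p : α) :
    chargeAbs e μ p = sSup (chSet e μ (fun x => -(μ x)) p) := by
  unfold chargeAbs chSet
  congr 1
  ext v
  constructor
  · rintro ⟨q, h1, h2, rfl⟩
    exact ⟨q, h1, h2, (sub_eq_add_neg _ _)⟩
  · rintro ⟨q, h1, h2, rfl⟩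
    exact ⟨q, h1, h2, (sub_eq_add_neg _ _).symm⟩

lemma rp_chargePos_eq (μ : α → α) (p : α) :
    chargePos e μ p = sSup (chSet e μ (fun _ => 0) p) := by
  unfold chargePos chSet
  congr 1
  ext v
  constructor
  · rintro ⟨q, h1, h2, rfl⟩
    exact ⟨q, h1, h2, (add_zero _).symm⟩
  · rintro ⟨q, h1, h2, rfl⟩
    exact ⟨q, h1, h2, add_zero _⟩

lemma rp_chargeNeg_eq (μ : α → α) (p : α) :
    chargeNeg e μ p = sSup (chSet e (fun x => -(μ x)) (fun _ => 0) p) := by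
  unfold chargeNeg chSet
  congr 1
  ext v
  constructor
  · rintro ⟨q, h1, h2, rfl⟩
    exact ⟨q, h1, h2, (add_zero _).symm⟩
  · rintro ⟨q, h1, h2, rfl⟩
    exact ⟨q, h1, h2, add_zero _⟩

lemma rp_chSet_nonempty (μ ν : α → α) {p : α} (hp : p ∈ Comp e) :
    (chSet e μ ν p).Nonempty := ⟨_, p, hp, le_rfl, rfl⟩

lemma rp_chSet_bddAbove {μ ν : α → α} {gμ gν : α}
    (hbμ : ∀ q ∈ Comp e, μ q ≤ gμ) (hbν : ∀ q ∈ Comp e, ν q ≤ gν)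
    {p : α} (hp : p ∈ Comp e) : BddAbove (chSet e μ ν p) := by
  refine ⟨gμ + gν, ?_⟩
  rintro v ⟨q, hq, hqle, rfl⟩
  exact add_le_add (hbμ q hq) (hbν _ (rp_comp_sub hp hq hqle))

lemma rp_chSet_bddBelow {μ ν : α → α} {lμ lν : α}
    (hbμ : ∀ q ∈ Comp e, lμ ≤ μ q) (hbν : ∀ q ∈ Comp e, lν ≤ ν q)
    {p : α} (hp : p ∈ Comp e) : BddBelow (chSet e μ ν p) := by
  refine ⟨lμ + lν, ?_⟩
  rintro v ⟨q, hq, hqle, rfl⟩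
  exact add_le_add (hbμ q hq) (hbν _ (rp_comp_sub hp hq hqle))

/-- Decomposition of elements of `chSet` over a disjoint pair, first direction. -/
lemma rp_chSet_split {μ ν : α → α} (hμ : IsChargeOn e μ) (hν : IsChargeOn e ν)
    {p₁ p₂ : α} (hp₁ : p₁ ∈ Comp e) (hp₂ : p₂ ∈ Comp e) (hd : p₁ ⊓ p₂ = 0)
    {v : α} (hv : v ∈ chSet e μ ν (p₁ + p₂)) :
    ∃ v₁ ∈ chSet e μ ν p₁, ∃ v₂ ∈ chSet e μ ν p₂, v = v₁ + v₂ := by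
  obtain ⟨q, hq, hqle, rfl⟩ := hv
  have hq₁ : q ⊓ p₁ ∈ Comp e := rp_comp_inf hq hp₁
  have hq₂ : q ⊓ p₂ ∈ Comp e := rp_comp_inf hq hp₂
  have hqdec : q = q ⊓ p₁ + q ⊓ p₂ := rp_comp_decomp hp₁ hp₂ hd hq hqle
  have hd12 : (q ⊓ p₁) ⊓ (q ⊓ p₂) = 0 :=
    le_antisymm ((inf_le_inf inf_le_right inf_le_right).trans hd.le)
      (le_inf (rp_comp_nonneg hq₁) (rp_comp_nonneg hq₂))
  have hμq : μ q = μ (q⊓p₁) + μ (q⊓p₂) := by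
    conv_lhs => rw [hqdec]
    exact hμ.2 _ _ hq₁ hq₂ hd12
  have hr₁ : p₁ - q⊓p₁ ∈ Comp e := rp_comp_sub hp₁ hq₁ inf_le_right
  have hr₂ : p₂ - q⊓p₂ ∈ Comp e := rp_comp_sub hp₂ hq₂ inf_le_right
  have hdr : (p₁ - q⊓p₁) ⊓ (p₂ - q⊓p₂) = 0 :=
    le_antisymm ((inf_le_inf (sub_le_self _ (rp_comp_nonneg hq₁))
      (sub_le_self _ (rp_comp_nonneg hq₂))).trans hd.le)
      (le_inf (rp_comp_nonneg hr₁) (rp_comp_nonneg hr₂))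
  have hrdec : p₁ + p₂ - q = (p₁ - q⊓p₁) + (p₂ - q⊓p₂) := by
    conv_lhs => rw [hqdec]
    abel
  have hνr : ν (p₁ + p₂ - q) = ν (p₁ - q⊓p₁) + ν (p₂ - q⊓p₂) := by
    rw [hrdec]
    exact hν.2 _ _ hr₁ hr₂ hdr
  refine ⟨μ (q⊓p₁) + ν (p₁ - q⊓p₁), ⟨q⊓p₁, hq₁, inf_le_right, rfl⟩,
    μ (q⊓p₂) + ν (p₂ - q⊓p₂), ⟨q⊓p₂, hq₂, inf_le_right, rfl⟩, ?_⟩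
  rw [hμq, hνr]
  abel

/-- Combination of elements of `chSet` over a disjoint pair, second direction. -/
lemma rp_chSet_combine {μ ν : α → α} (hμ : IsChargeOn e μ) (hν : IsChargeOn e ν)
    {p₁ p₂ : α} (hp₁ : p₁ ∈ Comp e) (hp₂ : p₂ ∈ Comp e) (hd : p₁ ⊓ p₂ = 0)
    {v₁ v₂ : α} (hv₁ : v₁ ∈ chSet e μ ν p₁) (hv₂ : v₂ ∈ chSet e μ ν p₂) :
    v₁ + v₂ ∈ chSet e μ ν (p₁ + p₂) := by
  obtain ⟨q₁, hq₁, hq₁le, rfl⟩ := hv₁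
  obtain ⟨q₂, hq₂, hq₂le, rfl⟩ := hv₂
  have hq12d : q₁ ⊓ q₂ = 0 := le_antisymm ((inf_le_inf hq₁le hq₂le).trans hd.le)
    (le_inf (rp_comp_nonneg hq₁) (rp_comp_nonneg hq₂))
  have hq12 : q₁ + q₂ ∈ Comp e := rp_comp_add hq₁ hq₂ hq12d
  have hμ12 : μ (q₁ + q₂) = μ q₁ + μ q₂ := hμ.2 _ _ hq₁ hq₂ hq12d
  have hr₁ : p₁ - q₁ ∈ Comp e := rp_comp_sub hp₁ hq₁ hq₁le
  have hr₂ : p₂ - q₂ ∈ Comp e := rp_comp_sub hp₂ hq₂ hq₂le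
  have hdr : (p₁ - q₁) ⊓ (p₂ - q₂) = 0 :=
    le_antisymm ((inf_le_inf (sub_le_self _ (rp_comp_nonneg hq₁))
      (sub_le_self _ (rp_comp_nonneg hq₂))).trans hd.le)
      (le_inf (rp_comp_nonneg hr₁) (rp_comp_nonneg hr₂))
  have hν12 : ν (p₁ + p₂ - (q₁ + q₂)) = ν (p₁ - q₁) + ν (p₂ - q₂) := by
    rw [show p₁ + p₂ - (q₁ + q₂) = (p₁ - q₁) + (p₂ - q₂) by abel]
    exact hν.2 _ _ hr₁ hr₂ hdr
  refine ⟨q₁ + q₂, hq12, add_le_add hq₁le hq₂le, ?_⟩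
  rw [hμ12, hν12]
  abel

lemma rp_chSup_add {μ ν : α → α} (hμ : IsChargeOn e μ) (hν : IsChargeOn e ν)
    {gμ gν : α} (hbμ : ∀ q ∈ Comp e, μ q ≤ gμ) (hbν : ∀ q ∈ Comp e, ν q ≤ gν)
    {p₁ p₂ : α} (hp₁ : p₁ ∈ Comp e) (hp₂ : p₂ ∈ Comp e) (hd : p₁ ⊓ p₂ = 0) :
    sSup (chSet e μ ν (p₁ + p₂)) = sSup (chSet e μ ν p₁) + sSup (chSet e μ ν p₂) := by
  have hp := rp_comp_add hp₁ hp₂ hd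
  refine le_antisymm ?_ ?_
  · refine csSup_le (rp_chSet_nonempty μ ν hp) ?_
    intro v hv
    obtain ⟨v₁, hv₁, v₂, hv₂, rfl⟩ := rp_chSet_split hμ hν hp₁ hp₂ hd hv
    exact add_le_add (le_csSup (rp_chSet_bddAbove hbμ hbν hp₁) hv₁)
      (le_csSup (rp_chSet_bddAbove hbμ hbν hp₂) hv₂)
  · refine rp_csSup_add_le (rp_chSet_nonempty μ ν hp₁) (rp_chSet_nonempty μ ν hp₂) ?_
    intro v₁ hv₁ v₂ hv₂
    exact le_csSup (rp_chSet_bddAbove hbμ hbν hp)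
      (rp_chSet_combine hμ hν hp₁ hp₂ hd hv₁ hv₂)

lemma rp_chInf_add {μ ν : α → α} (hμ : IsChargeOn e μ) (hν : IsChargeOn e ν)
    {lμ lν : α} (hbμ : ∀ q ∈ Comp e, lμ ≤ μ q) (hbν : ∀ q ∈ Comp e, lν ≤ ν q)
    {p₁ p₂ : α} (hp₁ : p₁ ∈ Comp e) (hp₂ : p₂ ∈ Comp e) (hd : p₁ ⊓ p₂ = 0) :
    sInf (chSet e μ ν (p₁ + p₂)) = sInf (chSet e μ ν p₁) + sInf (chSet e μ ν p₂) := by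
  have hp := rp_comp_add hp₁ hp₂ hd
  refine le_antisymm ?_ ?_
  · refine rp_le_csInf_add (rp_chSet_nonempty μ ν hp₁) (rp_chSet_nonempty μ ν hp₂) ?_
    intro v₁ hv₁ v₂ hv₂
    exact csInf_le (rp_chSet_bddBelow hbμ hbν hp)
      (rp_chSet_combine hμ hν hp₁ hp₂ hd hv₁ hv₂)
  · refine le_csInf (rp_chSet_nonempty μ ν hp) ?_
    intro v hv
    obtain ⟨v₁, hv₁, v₂, hv₂, rfl⟩ := rp_chSet_split hμ hν hp₁ hp₂ hd hv
    exact add_le_add (csInf_le (rp_chSet_bddBelow hbμ hbν hp₁) hv₁)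
      (csInf_le (rp_chSet_bddBelow hbμ hbν hp₂) hv₂)

lemma rp_chSet_zero {μ ν : α → α} (hμ0 : μ 0 = 0) (hν0 : ν 0 = 0) (he : 0 ≤ e) :
    chSet e μ ν (0:α) = {0} := by
  ext v
  constructor
  · rintro ⟨q, hq, hqle, rfl⟩
    have hq0 : q = 0 := le_antisymm hqle (rp_comp_nonneg hq)
    subst hq0
    rw [hμ0, sub_zero, hν0, add_zero]
    rfl
  · rintro rfl
    exact ⟨0, rp_comp_zero he, le_rfl, by rw [hμ0, sub_zero, hν0, add_zero]⟩

lemma rp_chSup_zero {μ ν : α → α} (hμ0 : μ 0 = 0) (hν0 : ν 0 = 0) (he : 0 ≤ e) :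
    sSup (chSet e μ ν (0:α)) = 0 := by
  rw [rp_chSet_zero hμ0 hν0 he, csSup_singleton]

lemma rp_chInf_zero {μ ν : α → α} (hμ0 : μ 0 = 0) (hν0 : ν 0 = 0) (he : 0 ≤ e) :
    sInf (chSet e μ ν (0:α)) = 0 := by
  rw [rp_chSet_zero hμ0 hν0 he, csInf_singleton]

/-- Directed supremum of charges is a charge. -/
lemma rp_dirSup_charge {S : Set (α → α)} (hSne : S.Nonempty) (hdir : DirectedOn (baLe e) S)
    (hch : ∀ μ ∈ S, IsChargeOn e μ)
    (hbdd : ∀ r ∈ Comp e, BddAbove ((fun μ : α → α => μ r) '' S)) (he : 0 ≤ e) :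
    IsChargeOn e (fun x => sSup ((fun μ : α → α => μ x) '' S)) := by
  obtain ⟨μ₀, hμ₀S⟩ := hSne
  have himg : ∀ x : α, ((fun μ : α → α => μ x) '' S).Nonempty :=
    fun x => ⟨μ₀ x, ⟨μ₀, hμ₀S, rfl⟩⟩
  constructor
  · refine le_antisymm ?_ ?_
    · refine csSup_le (himg 0) ?_
      rintro v ⟨μ, hμS, rfl⟩
      exact ((hch μ hμS).1).le
    · exact le_csSup (hbdd 0 (rp_comp_zero he)) ⟨μ₀, hμ₀S, (hch μ₀ hμ₀S).1⟩
  · intro p q hp hq hdisj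
    simp only
    refine le_antisymm ?_ ?_
    · refine csSup_le (himg _) ?_
      rintro v ⟨μ, hμS, rfl⟩
      simp only
      rw [(hch μ hμS).2 p q hp hq hdisj]
      exact add_le_add (le_csSup (hbdd p hp) ⟨μ, hμS, rfl⟩)
        (le_csSup (hbdd q hq) ⟨μ, hμS, rfl⟩)
    · refine rp_csSup_add_le (himg p) (himg q) ?_
      rintro x ⟨μ, hμS, rfl⟩ y ⟨ν, hνS, rfl⟩
      obtain ⟨ρ, hρS, hμρ, hνρ⟩ := hdir μ hμS ν hνS
      simp only
      have h1 : μ p + ν q ≤ ρ p + ρ q := add_le_add (hμρ p hp) (hνρ q hq)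
      have h2 : ρ p + ρ q = ρ (p+q) := ((hch ρ hρS).2 p q hp hq hdisj).symm
      exact (h1.trans_eq h2).trans
        (le_csSup (hbdd _ (rp_comp_add hp hq hdisj)) ⟨ρ, hρS, rfl⟩)

lemma rp_charge_add {μ ν : α → α} (hμ : IsChargeOn e μ) (hν : IsChargeOn e ν) :
    IsChargeOn e (fun p => μ p + ν p) := by
  constructor
  · simp only
    rw [hμ.1, hν.1, add_zero]
  · intro p q hp hq hd
    simp only
    rw [hμ.2 p q hp hq hd, hν.2 p q hp hq hd]
    abel

lemma rp_charge_neg {μ : α → α} (hμ : IsChargeOn e μ) :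
    IsChargeOn e (fun p => -(μ p)) := by
  constructor
  · simp only
    rw [hμ.1, neg_zero]
  · intro p q hp hq hd
    simp only
    rw [hμ.2 p q hp hq hd]
    abel

lemma rp_charge_sub {μ ν : α → α} (hμ : IsChargeOn e μ) (hν : IsChargeOn e ν) :
    IsChargeOn e (fun p => μ p - ν p) := by
  have h := rp_charge_add hμ (rp_charge_neg hν)
  constructor
  · have := h.1
    simp only at this ⊢
    rw [hμ.1, hν.1, sub_zero]
  · intro p q hp hq hd
    simp only
    rw [hμ.2 p q hp hq hd, hν.2 p q hp hq hd]
    abel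

end AuxCharge

section AuxBa
set_option linter.unusedSectionVars false
set_option maxHeartbeats 1600000

variable {E : Type u} {G : Type v}
variable [ConditionallyCompleteLattice E] [AddCommGroup E] [Module ℝ E]
  [CovariantClass E E (· + ·) (· ≤ ·)] [PosSMulMono ℝ E]
variable [ConditionallyCompleteLattice G] [AddCommGroup G] [Module ℝ G]
  [CovariantClass G G (· + ·) (· ≤ ·)] [PosSMulMono ℝ G]
variable (C : CRT E G)

lemma rpc_he0 : (0:E) ≤ C.e := (rpc_e_pos C).le

lemma rpc_baR_bounds {μ : E → E} (hμ : μ ∈ C.baR C.e) :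
    ∃ g ∈ C.R, 0 ≤ g ∧ (∀ q ∈ Comp C.e, μ q ≤ g) ∧ (∀ q ∈ Comp C.e, -(μ q) ≤ g) ∧
      ∀ q ∈ Comp C.e, |μ q| ≤ g := by
  obtain ⟨g, hgR, hg0, hb⟩ := hμ.2.2
  exact ⟨g, hgR, hg0, fun q hq => (le_abs_self _).trans (hb q hq),
    fun q hq => (neg_le_abs _).trans (hb q hq),
    hb⟩

lemma rpc_TpBand_mono {p q : E} (hp : p ∈ Comp C.e) (hq : q ∈ Comp C.e) (hqp : q ≤ p) :
    pBand (C.T q) ⊆ pBand (C.T p) := by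
  refine rp_pBand_mono ?_
  rw [abs_of_nonneg (C.triple.pos q (rp_comp_nonneg hq)),
    abs_of_nonneg (C.triple.pos p (rp_comp_nonneg hp))]
  exact rpc_T_mono C hqp

/-! #### `chargeAbs` package -/

lemma rpc_chAbs_isLUB {μ : E → E} (hμ : μ ∈ C.baR C.e) {p : E} (hp : p ∈ Comp C.e) :
    IsLUB (chSet C.e μ (fun x => -(μ x)) p) (chargeAbs C.e μ p) := by
  obtain ⟨g, _, _, hub, hlb, _⟩ := rpc_baR_bounds C hμ
  rw [rp_chargeAbs_eq]
  exact isLUB_csSup (rp_chSet_nonempty _ _ hp) (rp_chSet_bddAbove hub hlb hp)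

lemma rpc_abs_le_chAbs {μ : E → E} (hμ : μ ∈ C.baR C.e) {p : E} (hp : p ∈ Comp C.e) :
    |μ p| ≤ chargeAbs C.e μ p := by
  have hl := rpc_chAbs_isLUB C hμ hp
  have h1 : μ p ∈ chSet C.e μ (fun x => -(μ x)) p :=
    ⟨p, hp, le_rfl, by simp only [sub_self, hμ.1.1, neg_zero, add_zero]⟩
  have h2 : -(μ p) ∈ chSet C.e μ (fun x => -(μ x)) p :=
    ⟨0, rp_comp_zero (rpc_he0 C), rp_comp_nonneg hp,
      by simp only [hμ.1.1, sub_zero, zero_add]⟩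
  exact abs_le'.mpr ⟨hl.1 h1, hl.1 h2⟩

lemma rpc_chAbs_nonneg {μ : E → E} (hμ : μ ∈ C.baR C.e) {p : E} (hp : p ∈ Comp C.e) :
    0 ≤ chargeAbs C.e μ p := (abs_nonneg _).trans (rpc_abs_le_chAbs C hμ hp)

lemma rpc_chAbs_le {μ : E → E} (hμ : μ ∈ C.baR C.e) {g : E}
    (hb : ∀ q ∈ Comp C.e, |μ q| ≤ g) {p : E} (hp : p ∈ Comp C.e) :
    chargeAbs C.e μ p ≤ g + g := by
  rw [rp_chargeAbs_eq]
  refine csSup_le (rp_chSet_nonempty _ _ hp) ?_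
  rintro v ⟨q, hq, hqle, rfl⟩
  refine add_le_add ((le_abs_self _).trans (hb q hq)) ?_
  exact (neg_le_abs _).trans (hb _ (rp_comp_sub hp hq hqle))

lemma rpc_chAbs_mem_R {μ : E → E} (hμ : μ ∈ C.baR C.e) {p : E} (hp : p ∈ Comp C.e) :
    chargeAbs C.e μ p ∈ C.R := by
  obtain ⟨g, _, _, hub, hlb, _⟩ := rpc_baR_bounds C hμ
  rw [rp_chargeAbs_eq]
  refine rpc_R_csSup C ?_ (rp_chSet_nonempty _ _ hp) (rp_chSet_bddAbove hub hlb hp)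
  rintro v ⟨q, hq, hqle, rfl⟩
  exact rpc_R_add C (hμ.2.1 q hq) (rpc_R_neg C (hμ.2.1 _ (rp_comp_sub hp hq hqle)))

lemma rpc_chAbs_zero {μ : E → E} (hμ : IsChargeOn C.e μ) : chargeAbs C.e μ 0 = 0 := by
  rw [rp_chargeAbs_eq]
  exact rp_chSup_zero hμ.1 (by rw [hμ.1, neg_zero]) (rpc_he0 C)

lemma rpc_chAbs_add {μ : E → E} (hμ : μ ∈ C.baR C.e) {p q : E} (hp : p ∈ Comp C.e)
    (hq : q ∈ Comp C.e) (hd : p ⊓ q = 0) :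
    chargeAbs C.e μ (p + q) = chargeAbs C.e μ p + chargeAbs C.e μ q := by
  obtain ⟨g, _, _, hub, hlb, _⟩ := rpc_baR_bounds C hμ
  rw [rp_chargeAbs_eq, rp_chargeAbs_eq, rp_chargeAbs_eq]
  exact rp_chSup_add hμ.1 (rp_charge_neg hμ.1) hub hlb hp hq hd

lemma rpc_chAbs_charge {μ : E → E} (hμ : μ ∈ C.baR C.e) :
    IsChargeOn C.e (chargeAbs C.e μ) :=
  ⟨rpc_chAbs_zero C hμ.1, fun p q hp hq hd => rpc_chAbs_add C hμ hp hq hd⟩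

lemma rpc_chAbs_pBand {ν : E → E} (hν : ν ∈ C.baT) {p : E} (hp : p ∈ Comp C.e) :
    chargeAbs C.e ν p ∈ pBand (C.T p) := by
  have hl := rpc_chAbs_isLUB C hν.1 hp
  refine rp_pBand_isLUB (rp_chSet_nonempty _ _ hp) hl ?_
  rintro v ⟨q, hq, hqle, rfl⟩
  refine rp_pBand_add ?_ (rp_pBand_neg ?_)
  · exact rpc_TpBand_mono C hp hq hqle (hν.2 q hq)
  · exact rpc_TpBand_mono C hp (rp_comp_sub hp hq hqle) (sub_le_self _ (rp_comp_nonneg hq))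
      (hν.2 _ (rp_comp_sub hp hq hqle))

/-! #### `chargePos`/`chargeNeg` package -/

lemma rpc_chPos_isLUB {μ : E → E} (hμ : μ ∈ C.baR C.e) {p : E} (hp : p ∈ Comp C.e) :
    IsLUB (chSet C.e μ (fun _ => (0:E)) p) (chargePos C.e μ p) := by
  obtain ⟨g, _, hg0, hub, _, _⟩ := rpc_baR_bounds C hμ
  rw [rp_chargePos_eq]
  exact isLUB_csSup (rp_chSet_nonempty _ _ hp)
    (rp_chSet_bddAbove hub (fun q _ => hg0) hp)

lemma rpc_le_chPos {μ : E → E} (hμ : μ ∈ C.baR C.e) {p q : E} (hp : p ∈ Comp C.e)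
    (hq : q ∈ Comp C.e) (hqle : q ≤ p) : μ q ≤ chargePos C.e μ p :=
  (rpc_chPos_isLUB C hμ hp).1 ⟨q, hq, hqle, (add_zero _).symm⟩

lemma rpc_chPos_nonneg {μ : E → E} (hμ : μ ∈ C.baR C.e) {p : E} (hp : p ∈ Comp C.e) :
    0 ≤ chargePos C.e μ p := by
  have := rpc_le_chPos C hμ hp (rp_comp_zero (rpc_he0 C)) (rp_comp_nonneg hp)
  rwa [hμ.1.1] at this

lemma rpc_chPos_le {μ : E → E} (hμ : μ ∈ C.baR C.e) {g : E}
    (hb : ∀ q ∈ Comp C.e, μ q ≤ g) {p : E} (hp : p ∈ Comp C.e) (hg0 : 0 ≤ g) :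
    chargePos C.e μ p ≤ g := by
  rw [rp_chargePos_eq]
  refine csSup_le (rp_chSet_nonempty _ _ hp) ?_
  rintro v ⟨q, hq, hqle, rfl⟩
  rw [add_zero]
  exact hb q hq

lemma rpc_chPos_mem_R {μ : E → E} (hμ : μ ∈ C.baR C.e) {p : E} (hp : p ∈ Comp C.e) :
    chargePos C.e μ p ∈ C.R := by
  obtain ⟨g, _, hg0, hub, _, _⟩ := rpc_baR_bounds C hμ
  rw [rp_chargePos_eq]
  refine rpc_R_csSup C ?_ (rp_chSet_nonempty _ _ hp)
    (rp_chSet_bddAbove hub (fun q _ => hg0) hp)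
  rintro v ⟨q, hq, hqle, rfl⟩
  rw [add_zero]
  exact hμ.2.1 q hq

lemma rpc_chPos_charge {μ : E → E} (hμ : μ ∈ C.baR C.e) :
    IsChargeOn C.e (chargePos C.e μ) := by
  obtain ⟨g, _, hg0, hub, _, _⟩ := rpc_baR_bounds C hμ
  constructor
  · rw [rp_chargePos_eq]
    exact rp_chSup_zero hμ.1.1 rfl (rpc_he0 C)
  · intro p q hp hq hd
    rw [rp_chargePos_eq, rp_chargePos_eq, rp_chargePos_eq]
    exact rp_chSup_add hμ.1 ⟨rfl, fun _ _ _ _ _ => (add_zero _).symm⟩ hub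
      (fun q _ => hg0) hp hq hd

lemma rpc_neg_baR {μ : E → E} (hμ : μ ∈ C.baR C.e) :
    (fun x => -(μ x)) ∈ C.baR C.e := by
  obtain ⟨g, hgR, hg0, hb⟩ := hμ.2.2
  exact ⟨rp_charge_neg hμ.1, fun p hp => rpc_R_neg C (hμ.2.1 p hp),
    g, hgR, hg0, fun p hp => by rw [abs_neg]; exact hb p hp⟩

lemma rpc_chNeg_eq_chPos_neg (μ : E → E) :
    chargeNeg C.e μ = chargePos C.e (fun x => -(μ x)) := rfl

lemma rpc_chPos_sub_chNeg {μ : E → E} (hμ : μ ∈ C.baR C.e) {p : E} (hp : p ∈ Comp C.e) :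
    chargePos C.e μ p - chargeNeg C.e μ p = μ p := by
  have hkey : chargeNeg C.e μ p = chargePos C.e μ p - μ p := by
    rw [rpc_chNeg_eq_chPos_neg]
    refine le_antisymm ?_ ?_
    · refine ((rpc_chPos_isLUB C (rpc_neg_baR C hμ) hp).2) ?_
      rintro v ⟨q, hq, hqle, rfl⟩
      simp only
      rw [add_zero]
      have hsplit : μ p = μ q + μ (p - q) := rp_charge_split hμ.1 hp hq hqle
      have h1 : μ (p - q) ≤ chargePos C.e μ p :=
        rpc_le_chPos C hμ hp (rp_comp_sub hp hq hqle) (sub_le_self _ (rp_comp_nonneg hq))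
      have h2 : -(μ q) = μ (p - q) - μ p := by rw [hsplit]; abel
      rw [h2]
      exact sub_le_sub_right h1 _
    · have h3 : chargePos C.e μ p ≤ chargePos C.e (fun x => -(μ x)) p + μ p := by
        refine ((rpc_chPos_isLUB C hμ hp).2) ?_
        rintro v ⟨q, hq, hqle, rfl⟩
        simp only
        rw [add_zero]
        have hsplit : μ p = μ q + μ (p - q) := rp_charge_split hμ.1 hp hq hqle
        have h1 : -(μ (p - q)) ≤ chargePos C.e (fun x => -(μ x)) p :=
          rpc_le_chPos C (rpc_neg_baR C hμ) hp (rp_comp_sub hp hq hqle)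
            (sub_le_self _ (rp_comp_nonneg hq))
        have h2 : μ q = -(μ (p-q)) + μ p := by rw [hsplit]; abel
        rw [h2]
        exact add_le_add_left h1 _
      exact sub_le_iff_le_add.mpr h3
  rw [hkey]
  abel

end AuxBa

section AuxBa2
set_option linter.unusedSectionVars false
set_option maxHeartbeats 1600000

variable {E : Type u} {G : Type v}
variable [ConditionallyCompleteLattice E] [AddCommGroup E] [Module ℝ E]
  [CovariantClass E E (· + ·) (· ≤ ·)] [PosSMulMono ℝ E]
variable [ConditionallyCompleteLattice G] [AddCommGroup G] [Module ℝ G]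
  [CovariantClass G G (· + ·) (· ≤ ·)] [PosSMulMono ℝ G]
variable (C : CRT E G)

/-! #### Closure properties of `ba(T)` -/

lemma rpc_baT_add {μ ν : E → E} (hμ : μ ∈ C.baT) (hν : ν ∈ C.baT) :
    (fun p => μ p + ν p) ∈ C.baT := by
  obtain ⟨gμ, hgμR, hgμ0, hbμ⟩ := hμ.1.2.2
  obtain ⟨gν, hgνR, hgν0, hbν⟩ := hν.1.2.2
  refine ⟨⟨rp_charge_add hμ.1.1 hν.1.1,
    fun p hp => rpc_R_add C (hμ.1.2.1 p hp) (hν.1.2.1 p hp),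
    gμ + gν, rpc_R_add C hgμR hgνR, add_nonneg hgμ0 hgν0, fun p hp => ?_⟩,
    fun p hp => rp_pBand_add (hμ.2 p hp) (hν.2 p hp)⟩
  exact (abs_add_le _ _).trans (add_le_add (hbμ p hp) (hbν p hp))

lemma rpc_baT_neg {μ : E → E} (hμ : μ ∈ C.baT) : (fun p => -(μ p)) ∈ C.baT :=
  ⟨rpc_neg_baR C hμ.1, fun p hp => rp_pBand_neg (hμ.2 p hp)⟩

lemma rpc_baR_sub {μ ν : E → E} (hμ : μ ∈ C.baR C.e) (hν : ν ∈ C.baR C.e) :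
    (fun p => μ p - ν p) ∈ C.baR C.e := by
  obtain ⟨gμ, hgμR, hgμ0, hbμ⟩ := hμ.2.2
  obtain ⟨gν, hgνR, hgν0, hbν⟩ := hν.2.2
  refine ⟨rp_charge_sub hμ.1 hν.1,
    fun p hp => rpc_R_sub C (hμ.2.1 p hp) (hν.2.1 p hp),
    gμ + gν, rpc_R_add C hgμR hgνR, add_nonneg hgμ0 hgν0, fun p hp => ?_⟩
  exact (rp_abs_sub_le _ _).trans (add_le_add (hbμ p hp) (hbν p hp))

lemma rpc_baT_sub {μ ν : E → E} (hμ : μ ∈ C.baT) (hν : ν ∈ C.baT) :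
    (fun p => μ p - ν p) ∈ C.baT :=
  ⟨rpc_baR_sub C hμ.1 hν.1, fun p hp => rp_pBand_sub (hμ.2 p hp) (hν.2 p hp)⟩

lemma rpc_baT_smul {μ : E → E} (hμ : μ ∈ C.baT) (r : ℝ) :
    (fun p => r • μ p) ∈ C.baT := by
  obtain ⟨gμ, hgμR, hgμ0, hbμ⟩ := hμ.1.2.2
  refine ⟨⟨⟨?_, ?_⟩, fun p hp => rpc_R_smul C r (hμ.1.2.1 p hp),
    |r| • gμ, rpc_R_smul C _ hgμR, smul_nonneg (abs_nonneg r) hgμ0, fun p hp => ?_⟩,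
    fun p hp => rp_pBand_smul r (hμ.2 p hp)⟩
  · simp only
    rw [hμ.1.1.1, smul_zero]
  · intro p q hp hq hd
    simp only
    rw [hμ.1.1.2 p q hp hq hd, smul_add]
  · rw [rp_abs_smul]
    exact smul_le_smul_of_nonneg_left (hbμ p hp) (abs_nonneg r)

lemma rpc_baT_sm {μ : E → E} (hμ : μ ∈ C.baT) {g : E} (hg : g ∈ C.R) :
    (fun p => C.sm g (μ p)) ∈ C.baT := by
  obtain ⟨gμ, hgμR, hgμ0, hbμ⟩ := hμ.1.2.2
  have hbound : ∀ p ∈ Comp C.e, |C.sm g (μ p)| ≤ C.sm |g| gμ :=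
    fun p hp => rpc_abs_sm_le C hg (hbμ p hp)
  set S : Set E := {v | ∃ p ∈ Comp C.e, v = |C.sm g (μ p)|} with hSdef
  have hSne : S.Nonempty := ⟨_, 0, rp_comp_zero (rpc_he0 C), rfl⟩
  have hSbdd : BddAbove S := by
    refine ⟨C.sm |g| gμ, ?_⟩
    rintro v ⟨p, hp, rfl⟩
    exact hbound p hp
  have hSsub : S ⊆ C.R := by
    rintro v ⟨p, hp, rfl⟩
    exact rpc_R_abs C (rpc_sm_mem C hg (hμ.1.2.1 p hp))
  have hg'R : sSup S ∈ C.R := rpc_R_csSup C hSsub hSne hSbdd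
  refine ⟨⟨⟨?_, ?_⟩, fun p hp => rpc_sm_mem C hg (hμ.1.2.1 p hp),
    sSup S, hg'R, ?_, fun p hp => le_csSup hSbdd ⟨p, hp, rfl⟩⟩,
    fun p hp => rpc_sm_pBand C hg (hμ.2 p hp)⟩
  · simp only
    rw [hμ.1.1.1, rpc_sm_zero_right C hg]
  · intro p q hp hq hd
    simp only
    rw [hμ.1.1.2 p q hp hq hd, rpc_sm_add_right C hg]
  · refine le_trans ?_ (le_csSup hSbdd ⟨0, rp_comp_zero (rpc_he0 C), rfl⟩)
    exact abs_nonneg _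

/-! #### The maximal `ba(T)`-minorant `ρ` of a positive charge `π` -/

/-- Elements of `ba(T)` squeezed between `0` and `π`. -/
def rpcN (π : E → E) : Set (E → E) :=
  {ν | ν ∈ C.baT ∧ ∀ p ∈ Comp C.e, 0 ≤ ν p ∧ ν p ≤ π p}

/-- The pointwise supremum of `rpcN`. -/
def rpcRho (π : E → E) : E → E :=
  fun x => sSup ((fun ν : E → E => ν x) '' rpcN C π)

lemma rpc_zero_baT : (fun _ : E => (0:E)) ∈ C.baT := by
  refine ⟨⟨⟨rfl, fun _ _ _ _ _ => (add_zero 0).symm⟩, fun p _ => rpc_R_zero C,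
    0, rpc_R_zero C, le_rfl, fun p _ => ?_⟩, fun p _ => rp_pBand_zero⟩
  rw [abs_zero]

variable {π : E → E}

lemma rpc_N_nonempty (hπ0 : ∀ p ∈ Comp C.e, 0 ≤ π p) : (rpcN C π).Nonempty :=
  ⟨fun _ => 0, rpc_zero_baT C, fun p hp => ⟨le_rfl, hπ0 p hp⟩⟩

lemma rpc_N_bdd : ∀ r ∈ Comp C.e, BddAbove ((fun ν : E → E => ν r) '' rpcN C π) := by
  intro r hr
  refine ⟨π r, ?_⟩
  rintro v ⟨ν, hν, rfl⟩
  exact (hν.2 r hr).2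

lemma rpc_N_directed (hπ : π ∈ C.baR C.e) : DirectedOn (baLe C.e) (rpcN C π) := by
  obtain ⟨gπ, hgπR, hgπ0, hubπ, _, habsπ⟩ := rpc_baR_bounds C hπ
  rintro ν₁ ⟨hT₁, hb₁⟩ ν₂ ⟨hT₂, hb₂⟩
  have hch₁ : IsChargeOn C.e ν₁ := hT₁.1.1
  have hch₂ : IsChargeOn C.e ν₂ := hT₂.1.1
  set σ : E → E := fun x => sSup (chSet C.e ν₁ ν₂ x) with hσ
  have hub₁ : ∀ q ∈ Comp C.e, ν₁ q ≤ gπ := fun q hq => ((hb₁ q hq).2).trans (hubπ q hq)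
  have hub₂ : ∀ q ∈ Comp C.e, ν₂ q ≤ gπ := fun q hq => ((hb₂ q hq).2).trans (hubπ q hq)
  have hbdd : ∀ {p : E}, p ∈ Comp C.e → BddAbove (chSet C.e ν₁ ν₂ p) :=
    fun {p} hp => rp_chSet_bddAbove hub₁ hub₂ hp
  have hσ_ge₁ : ∀ p ∈ Comp C.e, ν₁ p ≤ σ p := by
    intro p hp
    exact le_csSup (hbdd hp) ⟨p, hp, le_rfl, by simp only [sub_self, hch₂.1, add_zero]⟩
  have hσ_ge₂ : ∀ p ∈ Comp C.e, ν₂ p ≤ σ p := by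
    intro p hp
    exact le_csSup (hbdd hp)
      ⟨0, rp_comp_zero (rpc_he0 C), rp_comp_nonneg hp, by
        simp only [hch₁.1, zero_add, sub_zero]⟩
  have hσ_le : ∀ p ∈ Comp C.e, σ p ≤ π p := by
    intro p hp
    refine csSup_le (rp_chSet_nonempty _ _ hp) ?_
    rintro v ⟨q, hq, hqle, rfl⟩
    have hπsplit : π p = π q + π (p - q) := rp_charge_split hπ.1 hp hq hqle
    rw [hπsplit]
    exact add_le_add ((hb₁ q hq).2) ((hb₂ _ (rp_comp_sub hp hq hqle)).2)
  have hσ0 : ∀ p ∈ Comp C.e, 0 ≤ σ p := fun p hp =>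
    le_trans (hb₁ p hp).1 (hσ_ge₁ p hp)
  have hσcharge : IsChargeOn C.e σ :=
    ⟨rp_chSup_zero hch₁.1 hch₂.1 (rpc_he0 C),
      fun p q hp hq hd => rp_chSup_add hch₁ hch₂ hub₁ hub₂ hp hq hd⟩
  have hσbaT : σ ∈ C.baT := by
    refine ⟨⟨hσcharge, ?_, gπ, hgπR, hgπ0, ?_⟩, ?_⟩
    · intro p hp
      refine rpc_R_csSup C ?_ (rp_chSet_nonempty _ _ hp) (hbdd hp)
      rintro v ⟨q, hq, hqle, rfl⟩
      exact rpc_R_add C (hT₁.1.2.1 q hq) (hT₂.1.2.1 _ (rp_comp_sub hp hq hqle))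
    · intro p hp
      rw [abs_of_nonneg (hσ0 p hp)]
      exact (hσ_le p hp).trans (hubπ p hp)
    · intro p hp
      refine rp_pBand_isLUB (rp_chSet_nonempty _ _ hp)
        (isLUB_csSup (rp_chSet_nonempty _ _ hp) (hbdd hp)) ?_
      rintro v ⟨q, hq, hqle, rfl⟩
      refine rp_pBand_add (rpc_TpBand_mono C hp hq hqle (hT₁.2 q hq)) ?_
      exact rpc_TpBand_mono C hp (rp_comp_sub hp hq hqle)
        (sub_le_self _ (rp_comp_nonneg hq)) (hT₂.2 _ (rp_comp_sub hp hq hqle))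
  exact ⟨σ, ⟨hσbaT, fun p hp => ⟨hσ0 p hp, hσ_le p hp⟩⟩, hσ_ge₁, hσ_ge₂⟩

lemma rpc_rho_mem_N (hπ : π ∈ C.baR C.e) (hπ0 : ∀ p ∈ Comp C.e, 0 ≤ π p) :
    rpcRho C π ∈ rpcN C π := by
  obtain ⟨gπ, hgπR, hgπ0, hubπ, _, habsπ⟩ := rpc_baR_bounds C hπ
  have hne := rpc_N_nonempty C hπ0
  have himg : ∀ x, x ∈ Comp C.e → ((fun ν : E → E => ν x) '' rpcN C π).Nonempty :=
    fun x _ => hne.image _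
  have hρ0 : ∀ p ∈ Comp C.e, 0 ≤ rpcRho C π p := by
    intro p hp
    exact le_csSup (rpc_N_bdd C p hp)
      ⟨fun _ => 0, ⟨rpc_zero_baT C, fun q hq => ⟨le_rfl, hπ0 q hq⟩⟩, rfl⟩
  have hρle : ∀ p ∈ Comp C.e, rpcRho C π p ≤ π p := by
    intro p hp
    refine csSup_le (himg p hp) ?_
    rintro v ⟨ν, hν, rfl⟩
    exact (hν.2 p hp).2
  have hρch : IsChargeOn C.e (rpcRho C π) :=
    rp_dirSup_charge hne (rpc_N_directed C hπ) (fun ν hν => hν.1.1.1)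
      (rpc_N_bdd C) (rpc_he0 C)
  refine ⟨⟨⟨hρch, ?_, gπ, hgπR, hgπ0, ?_⟩, ?_⟩, fun p hp => ⟨hρ0 p hp, hρle p hp⟩⟩
  · intro p hp
    refine rpc_R_csSup C ?_ (himg p hp) (rpc_N_bdd C p hp)
    rintro v ⟨ν, hν, rfl⟩
    exact hν.1.1.2.1 p hp
  · intro p hp
    rw [abs_of_nonneg (hρ0 p hp)]
    exact (hρle p hp).trans (hubπ p hp)
  · intro p hp
    refine rp_pBand_isLUB (himg p hp)
      (isLUB_csSup (himg p hp) (rpc_N_bdd C p hp)) ?_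
    rintro v ⟨ν, hν, rfl⟩
    exact hν.1.2 p hp

lemma rpc_le_rho {ν : E → E} (hν : ν ∈ rpcN C π) {p : E} (hp : p ∈ Comp C.e) :
    ν p ≤ rpcRho C π p :=
  le_csSup (rpc_N_bdd C p hp) ⟨ν, hν, rfl⟩

/-- The key disjointness: the residual `π - ρ` is disjoint from every positive
`T`-absolutely continuous charge `B`. -/
lemma rpc_tau_zero (hπ : π ∈ C.baR C.e) (hπ0 : ∀ p ∈ Comp C.e, 0 ≤ π p)
    {B : E → E} (hBch : IsChargeOn C.e B) (hB0 : ∀ q ∈ Comp C.e, 0 ≤ B q)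
    (hBR : ∀ q ∈ Comp C.e, B q ∈ C.R)
    (hBpB : ∀ q ∈ Comp C.e, B q ∈ pBand (C.T q))
    {gB : E} (hgBR : gB ∈ C.R) (hgB0 : 0 ≤ gB) (hBb : ∀ q ∈ Comp C.e, B q ≤ gB)
    {p : E} (hp : p ∈ Comp C.e) :
    sInf (chSet C.e (fun x => π x - rpcRho C π x) B p) = 0 := by
  have hρN := rpc_rho_mem_N C hπ hπ0
  set ρ := rpcRho C π with hρdef
  set σ : E → E := fun x => π x - ρ x with hσdef
  have hσch : IsChargeOn C.e σ := rp_charge_sub hπ.1 hρN.1.1.1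
  have hσ0 : ∀ q ∈ Comp C.e, 0 ≤ σ q := fun q hq => sub_nonneg.2 (hρN.2 q hq).2
  have hσ0' : σ 0 = 0 := hσch.1
  set τ : E → E := fun x => sInf (chSet C.e σ B x) with hτdef
  have hblw : ∀ {r : E}, r ∈ Comp C.e → BddBelow (chSet C.e σ B r) :=
    fun {r} hr => rp_chSet_bddBelow hσ0 hB0 hr
  have hτ0 : ∀ q ∈ Comp C.e, 0 ≤ τ q := by
    intro q hq
    refine le_csInf (rp_chSet_nonempty _ _ hq) ?_
    rintro v ⟨r, hr, hrle, rfl⟩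
    exact add_nonneg (hσ0 r hr) (hB0 _ (rp_comp_sub hq hr hrle))
  have hτleσ : ∀ q ∈ Comp C.e, τ q ≤ σ q := by
    intro q hq
    exact csInf_le (hblw hq) ⟨q, hq, le_rfl, by simp only [sub_self, hBch.1, add_zero]⟩
  have hτleB : ∀ q ∈ Comp C.e, τ q ≤ B q := by
    intro q hq
    exact csInf_le (hblw hq)
      ⟨0, rp_comp_zero (rpc_he0 C), rp_comp_nonneg hq, by
        simp only [hσ0', zero_add, sub_zero]⟩
  have hτch : IsChargeOn C.e τ :=
    ⟨rp_chInf_zero hσ0' hBch.1 (rpc_he0 C),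
      fun r r' hr hr' hd => rp_chInf_add hσch hBch hσ0 hB0 hr hr' hd⟩
  have hτbaT : τ ∈ C.baT := by
    refine ⟨⟨hτch, ?_, gB, hgBR, hgB0, ?_⟩, ?_⟩
    · intro q hq
      refine rpc_R_csInf C ?_ (rp_chSet_nonempty _ _ hq) (hblw hq)
      rintro v ⟨r, hr, hrle, rfl⟩
      refine rpc_R_add C (rpc_R_sub C (hπ.2.1 r hr) (hρN.1.1.2.1 r hr)) ?_
      exact hBR _ (rp_comp_sub hq hr hrle)
    · intro q hq
      rw [abs_of_nonneg (hτ0 q hq)]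
      exact (hτleB q hq).trans (hBb q hq)
    · intro q hq
      refine rp_pBand_solid ?_ (hBpB q hq)
      rw [abs_of_nonneg (hτ0 q hq), abs_of_nonneg (hB0 q hq)]
      exact hτleB q hq
  have hρτN : (fun x => ρ x + τ x) ∈ rpcN C π := by
    refine ⟨rpc_baT_add C hρN.1 hτbaT, fun q hq => ?_⟩
    constructor
    · exact add_nonneg (hρN.2 q hq).1 (hτ0 q hq)
    · have := hτleσ q hq
      have h2 : ρ q + τ q ≤ ρ q + σ q := add_le_add_right this _
      have h3 : ρ q + σ q = π q := by simp only [hσdef]; abel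
      exact h2.trans_eq h3
  have hmax : ∀ q ∈ Comp C.e, ρ q + τ q ≤ ρ q := fun q hq =>
    rpc_le_rho C hρτN hq
  have hτzero : ∀ q ∈ Comp C.e, τ q = 0 := by
    intro q hq
    refine le_antisymm ?_ (hτ0 q hq)
    have := hmax q hq
    exact (add_le_iff_nonpos_right _).mp this
  exact hτzero p hp

/-! #### δ-lemmas for `chInfAt` -/

lemma rpc_chInf_nonneg {A B : E → E} (hA0 : ∀ q ∈ Comp C.e, 0 ≤ A q)
    (hB0 : ∀ q ∈ Comp C.e, 0 ≤ B q) {p : E} (hp : p ∈ Comp C.e) :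
    0 ≤ sInf (chSet C.e A B p) := by
  refine le_csInf (rp_chSet_nonempty _ _ hp) ?_
  rintro v ⟨q, hq, hqle, rfl⟩
  exact add_nonneg (hA0 q hq) (hB0 _ (rp_comp_sub hp hq hqle))

lemma rpc_chInf_mono {A A' B : E → E} (hle : ∀ q ∈ Comp C.e, A' q ≤ A q)
    (hA'0 : ∀ q ∈ Comp C.e, 0 ≤ A' q) (hB0 : ∀ q ∈ Comp C.e, 0 ≤ B q)
    {p : E} (hp : p ∈ Comp C.e) :
    sInf (chSet C.e A' B p) ≤ sInf (chSet C.e A B p) := by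
  refine le_csInf (rp_chSet_nonempty _ _ hp) ?_
  rintro v ⟨q, hq, hqle, rfl⟩
  refine le_trans (csInf_le (rp_chSet_bddBelow hA'0 hB0 hp) ⟨q, hq, hqle, rfl⟩) ?_
  exact add_le_add_left (hle q hq) _

lemma rpc_B_subadd {B : E → E} (hBch : IsChargeOn C.e B)
    (hB0 : ∀ q ∈ Comp C.e, 0 ≤ B q) {p q q' : E} (hp : p ∈ Comp C.e)
    (hq : q ∈ Comp C.e) (hq' : q' ∈ Comp C.e) (hqp : q ≤ p) (hq'p : q' ≤ p) :
    B (p - q ⊓ q') ≤ B (p - q) + B (p - q') := by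
  have hqq' : q ⊓ q' ∈ Comp C.e := rp_comp_inf hq hq'
  have h1 : p - q ⊓ q' ∈ Comp C.e := rp_comp_sub hp hqq' (inf_le_left.trans hqp)
  have h2 : p - q ∈ Comp C.e := rp_comp_sub hp hq hqp
  have h3 : p - q ≤ p - q ⊓ q' := sub_le_sub_left inf_le_left p
  have hsplit : B (p - q ⊓ q') = B (p - q) + B ((p - q ⊓ q') - (p - q)) :=
    rp_charge_split hBch h1 h2 h3
  have harith : (p - q ⊓ q') - (p - q) = q - q ⊓ q' := by abel
  have h4 : q - q ⊓ q' ∈ Comp C.e := rp_comp_sub hq hqq' inf_le_left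
  have h5 : q - q ⊓ q' ≤ p - q' := by
    have hsup : q ⊔ q' ≤ p := sup_le hqp hq'p
    have hid : q + q' = q ⊔ q' + q ⊓ q' := (inf_add_sup q q').symm.trans (by rw [add_comm (q ⊓ q')])
    rw [sub_le_sub_iff]
    calc q + q' = q ⊔ q' + q ⊓ q' := hid
      _ ≤ p + q ⊓ q' := add_le_add_left hsup _
  have h6 : B (q - q ⊓ q') ≤ B (p - q') :=
    rp_charge_mono hBch hB0 (rp_comp_sub hp hq' hq'p) h4 h5
  rw [hsplit, harith]
  exact add_le_add_right h6 _

lemma rpc_chInf_subadd {A₁ A₂ B : E → E}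
    (hA₁ch : IsChargeOn C.e A₁) (hA₂ch : IsChargeOn C.e A₂) (hBch : IsChargeOn C.e B)
    (hA₁0 : ∀ q ∈ Comp C.e, 0 ≤ A₁ q) (hA₂0 : ∀ q ∈ Comp C.e, 0 ≤ A₂ q)
    (hB0 : ∀ q ∈ Comp C.e, 0 ≤ B q) {p : E} (hp : p ∈ Comp C.e) :
    sInf (chSet C.e (fun x => A₁ x + A₂ x) B p) ≤
      sInf (chSet C.e A₁ B p) + sInf (chSet C.e A₂ B p) := by
  refine rp_le_csInf_add (rp_chSet_nonempty _ _ hp) (rp_chSet_nonempty _ _ hp) ?_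
  rintro v₁ ⟨q, hq, hqle, rfl⟩ v₂ ⟨q', hq', hq'le, rfl⟩
  have hqq' : q ⊓ q' ∈ Comp C.e := rp_comp_inf hq hq'
  have hr : q ⊓ q' ≤ p := inf_le_left.trans hqle
  have hA₁m : A₁ (q ⊓ q') ≤ A₁ q := rp_charge_mono hA₁ch hA₁0 hq hqq' inf_le_left
  have hA₂m : A₂ (q ⊓ q') ≤ A₂ q' := rp_charge_mono hA₂ch hA₂0 hq' hqq' inf_le_right
  have hBsub := rpc_B_subadd C hBch hB0 hp hq hq' hqle hq'le
  have hmem : (fun x => A₁ x + A₂ x) (q ⊓ q') + B (p - q ⊓ q') ∈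
      chSet C.e (fun x => A₁ x + A₂ x) B p := ⟨q ⊓ q', hqq', hr, rfl⟩
  have hA₁A₂0 : ∀ r ∈ Comp C.e, 0 ≤ (fun x => A₁ x + A₂ x) r :=
    fun r hr => add_nonneg (hA₁0 r hr) (hA₂0 r hr)
  refine le_trans (csInf_le (rp_chSet_bddBelow hA₁A₂0 hB0 hp) hmem) ?_
  simp only
  calc A₁ (q ⊓ q') + A₂ (q ⊓ q') + B (p - q ⊓ q')
      ≤ A₁ q + A₂ q' + (B (p - q) + B (p - q')) :=
        add_le_add (add_le_add hA₁m hA₂m) hBsub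
    _ = A₁ q + B (p - q) + (A₂ q' + B (p - q')) := by abel

end AuxBa2
/-- **Lebesgue decomposition.** Let `(E,e,T)` be a `T`-universally
complete conditional Riesz triple.  Then `ba(T)`, the set of `T`-absolutely continuous
order bounded signed `R(T)`-valued charges on `C_e`, is an `R(T)`-submodule of
`ba(C_e,R(T))` and a projection band in `ba(C_e,R(T))`: it is solid, order closed,
and every `μ ∈ ba(C_e,R(T))` decomposes as `μ = μ₁ + μ₂` with `μ₁ ∈ ba(T)` and `μ₂`
disjoint from `ba(T)`. -/
theorem baT_projection_band {E : Type u} {G : Type v}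
    [ConditionallyCompleteLattice E] [AddCommGroup E] [Module ℝ E]
    [CovariantClass E E (· + ·) (· ≤ ·)] [PosSMulMono ℝ E]
    [ConditionallyCompleteLattice G] [AddCommGroup G] [Module ℝ G]
    [CovariantClass G G (· + ·) (· ≤ ·)] [PosSMulMono ℝ G]
    (C : CRT E G) :
    -- R(T)-submodule
    (∀ μ ∈ C.baT, ∀ ν ∈ C.baT, (fun p => μ p + ν p) ∈ C.baT) ∧
    (∀ μ ∈ C.baT, ∀ r : ℝ, (fun p => r • μ p) ∈ C.baT) ∧
    (∀ μ ∈ C.baT, ∀ g ∈ C.R, (fun p => C.sm g (μ p)) ∈ C.baT) ∧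
    -- solid (an order ideal)
    (∀ μ ∈ C.baR C.e, ∀ ν ∈ C.baT,
      (∀ p ∈ Comp C.e, chargeAbs C.e μ p ≤ chargeAbs C.e ν p) → μ ∈ C.baT) ∧
    -- order closed (a band)
    (∀ S : Set (E → E), S ⊆ C.baT → S.Nonempty → DirectedOn (baLe C.e) S →
      ∀ η ∈ C.baR C.e, (∀ μ ∈ S, baLe C.e μ η) →
        (∀ ξ ∈ C.baR C.e, (∀ μ ∈ S, baLe C.e μ ξ) → baLe C.e η ξ) → η ∈ C.baT) ∧
    -- a projection band
    (∀ μ ∈ C.baR C.e, ∃ μ₁ ∈ C.baT, ∃ μ₂ ∈ C.baR C.e,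
      (∀ p ∈ Comp C.e, μ p = μ₁ p + μ₂ p) ∧
      ∀ ν ∈ C.baT, chInfAt C.e (chargeAbs C.e μ₂) (chargeAbs C.e ν) C.e = 0) := by
  refine ⟨fun μ hμ ν hν => rpc_baT_add C hμ hν,
    fun μ hμ r => rpc_baT_smul C hμ r,
    fun μ hμ g hg => rpc_baT_sm C hμ hg,
    ?_, ?_, ?_⟩
  · -- solid
    intro μ hμR ν hν h
    refine ⟨hμR, fun p hp => ?_⟩
    refine rp_pBand_solid ?_ (rpc_chAbs_pBand C hν hp)
    rw [abs_of_nonneg (rpc_chAbs_nonneg C hν.1 hp)]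
    exact (rpc_abs_le_chAbs C hμR hp).trans (h p hp)
  · -- order closed
    intro S hST hSne hdir η hηR hub hmin
    obtain ⟨μ₀, hμ₀⟩ := hSne
    set ξ : E → E := fun x => sSup ((fun μ : E → E => μ x) '' S) with hξdef
    have hcharges : ∀ μ ∈ S, IsChargeOn C.e μ := fun μ hμ => (hST hμ).1.1
    have hbdd : ∀ r ∈ Comp C.e, BddAbove ((fun μ : E → E => μ r) '' S) := by
      intro r hr
      exact ⟨η r, by rintro v ⟨μ, hμ, rfl⟩; exact hub μ hμ r hr⟩
    have himg : ∀ x : E, ((fun μ : E → E => μ x) '' S).Nonempty :=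
      fun x => ⟨μ₀ x, μ₀, hμ₀, rfl⟩
    have hξch : IsChargeOn C.e ξ :=
      rp_dirSup_charge ⟨μ₀, hμ₀⟩ hdir hcharges hbdd (rpc_he0 C)
    have hξle : ∀ p ∈ Comp C.e, ξ p ≤ η p := fun p hp =>
      csSup_le (himg p) (by rintro v ⟨μ, hμ, rfl⟩; exact hub μ hμ p hp)
    have hξge : ∀ μ ∈ S, baLe C.e μ ξ := fun μ hμ p hp =>
      le_csSup (hbdd p hp) ⟨μ, hμ, rfl⟩
    obtain ⟨gη, hgηR, hgη0, hbη⟩ := hηR.2.2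
    obtain ⟨g₀, hg₀R, hg₀0, hb₀⟩ := (hST hμ₀).1.2.2
    have hξbaR : ξ ∈ C.baR C.e := by
      refine ⟨hξch, ?_, gη ⊔ g₀, rpc_R_sup C hgηR hg₀R, le_trans hgη0 le_sup_left, ?_⟩
      · intro p hp
        refine rpc_R_csSup C ?_ (himg p) (hbdd p hp)
        rintro v ⟨μ, hμ, rfl⟩
        exact (hST hμ).1.2.1 p hp
      · intro p hp
        refine abs_le'.mpr ⟨?_, ?_⟩
        · exact (hξle p hp).trans (((le_abs_self _).trans (hbη p hp)).trans le_sup_left)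
        · have h9 : μ₀ p ≤ ξ p := hξge μ₀ hμ₀ p hp
          have h10 : -(ξ p) ≤ -(μ₀ p) := by
            have h11 : (0:E) ≤ -(μ₀ p) - -(ξ p) := by
              rw [show -(μ₀ p) - -(ξ p) = ξ p - μ₀ p by abel]
              exact sub_nonneg.2 h9
            exact sub_nonneg.mp h11
          exact h10.trans (((neg_le_abs _).trans (hb₀ p hp)).trans le_sup_right)
    have hηξ : ∀ p ∈ Comp C.e, η p = ξ p := fun p hp =>
      le_antisymm (hmin ξ hξbaR hξge p hp) (hξle p hp)
    refine ⟨hηR, fun p hp => ?_⟩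
    rw [hηξ p hp]
    refine rp_pBand_isLUB (himg p) (isLUB_csSup (himg p) (hbdd p hp)) ?_
    rintro v ⟨μ, hμ, rfl⟩
    exact (hST hμ).2 p hp
  · -- projection band
    intro μ hμ
    obtain ⟨g, hgR, hg0, hubμ, hlbμ, habsμ⟩ := rpc_baR_bounds C hμ
    have hμPbaR : chargePos C.e μ ∈ C.baR C.e := by
      refine ⟨rpc_chPos_charge C hμ, fun p hp => rpc_chPos_mem_R C hμ hp,
        g, hgR, hg0, fun p hp => ?_⟩
      rw [abs_of_nonneg (rpc_chPos_nonneg C hμ hp)]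
      exact rpc_chPos_le C hμ hubμ hp hg0
    have hμNbaR : chargePos C.e (fun x => -(μ x)) ∈ C.baR C.e := by
      refine ⟨rpc_chPos_charge C (rpc_neg_baR C hμ),
        fun p hp => rpc_chPos_mem_R C (rpc_neg_baR C hμ) hp,
        g, hgR, hg0, fun p hp => ?_⟩
      rw [abs_of_nonneg (rpc_chPos_nonneg C (rpc_neg_baR C hμ) hp)]
      exact rpc_chPos_le C (rpc_neg_baR C hμ) hlbμ hp hg0
    have hμP0 : ∀ p ∈ Comp C.e, 0 ≤ chargePos C.e μ p :=
      fun p hp => rpc_chPos_nonneg C hμ hp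
    have hμN0 : ∀ p ∈ Comp C.e, 0 ≤ chargePos C.e (fun x => -(μ x)) p :=
      fun p hp => rpc_chPos_nonneg C (rpc_neg_baR C hμ) hp
    have hρP := rpc_rho_mem_N C hμPbaR hμP0
    have hρN := rpc_rho_mem_N C hμNbaR hμN0
    set μ₁ : E → E := fun p =>
      rpcRho C (chargePos C.e μ) p - rpcRho C (chargePos C.e (fun x => -(μ x))) p
      with hμ₁def
    have hμ₁baT : μ₁ ∈ C.baT := rpc_baT_sub C hρP.1 hρN.1
    set μ₂ : E → E := fun p => μ p - μ₁ p with hμ₂def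
    have hμ₂baR : μ₂ ∈ C.baR C.e := rpc_baR_sub C hμ hμ₁baT.1
    refine ⟨μ₁, hμ₁baT, μ₂, hμ₂baR, fun p _ => by simp only [hμ₂def]; abel, ?_⟩
    intro ν hν
    obtain ⟨gν, hgνR, hgν0, hubν, hlbν, habsν⟩ := rpc_baR_bounds C hν.1
    have hBch : IsChargeOn C.e (chargeAbs C.e ν) := rpc_chAbs_charge C hν.1
    have hB0 : ∀ q ∈ Comp C.e, 0 ≤ chargeAbs C.e ν q :=
      fun q hq => rpc_chAbs_nonneg C hν.1 hq
    have hBR : ∀ q ∈ Comp C.e, chargeAbs C.e ν q ∈ C.R :=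
      fun q hq => rpc_chAbs_mem_R C hν.1 hq
    have hBpB : ∀ q ∈ Comp C.e, chargeAbs C.e ν q ∈ pBand (C.T q) :=
      fun q hq => rpc_chAbs_pBand C hν hq
    have hBb : ∀ q ∈ Comp C.e, chargeAbs C.e ν q ≤ gν + gν :=
      fun q hq => rpc_chAbs_le C hν.1 habsν hq
    have he := rp_comp_self (rpc_he0 C)
    set σP : E → E := fun x => chargePos C.e μ x - rpcRho C (chargePos C.e μ) x
      with hσPdef
    set σN : E → E := fun x =>
      chargePos C.e (fun y => -(μ y)) x - rpcRho C (chargePos C.e (fun y => -(μ y))) x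
      with hσNdef
    have hτP : sInf (chSet C.e σP (chargeAbs C.e ν) C.e) = 0 :=
      rpc_tau_zero C hμPbaR hμP0 hBch hB0 hBR hBpB
        (rpc_R_add C hgνR hgνR) (add_nonneg hgν0 hgν0) hBb he
    have hτN : sInf (chSet C.e σN (chargeAbs C.e ν) C.e) = 0 :=
      rpc_tau_zero C hμNbaR hμN0 hBch hB0 hBR hBpB
        (rpc_R_add C hgνR hgνR) (add_nonneg hgν0 hgν0) hBb he
    have hσPch : IsChargeOn C.e σP := rp_charge_sub hμPbaR.1 hρP.1.1.1
    have hσNch : IsChargeOn C.e σN := rp_charge_sub hμNbaR.1 hρN.1.1.1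
    have hσP0 : ∀ q ∈ Comp C.e, 0 ≤ σP q := fun q hq =>
      sub_nonneg.2 (hρP.2 q hq).2
    have hσN0 : ∀ q ∈ Comp C.e, 0 ≤ σN q := fun q hq =>
      sub_nonneg.2 (hρN.2 q hq).2
    have hsum0 : sInf (chSet C.e (fun x => σP x + σN x) (chargeAbs C.e ν) C.e) = 0 := by
      refine le_antisymm ?_ (rpc_chInf_nonneg C
        (fun q hq => add_nonneg (hσP0 q hq) (hσN0 q hq)) hB0 he)
      have h1 := rpc_chInf_subadd C hσPch hσNch hBch hσP0 hσN0 hB0 he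
      rw [hτP, hτN, add_zero] at h1
      exact h1
    have hA0 : ∀ q ∈ Comp C.e, 0 ≤ chargeAbs C.e μ₂ q :=
      fun q hq => rpc_chAbs_nonneg C hμ₂baR hq
    have hid : ∀ x ∈ Comp C.e, μ₂ x = σP x - σN x := by
      intro x hx
      have hμx : μ x = chargePos C.e μ x - chargeNeg C.e μ x :=
        (rpc_chPos_sub_chNeg C hμ hx).symm
      have hνx : chargeNeg C.e μ x = chargePos C.e (fun y => -(μ y)) x := rfl
      simp only [hμ₂def, hμ₁def, hσPdef, hσNdef]
      rw [hμx, hνx]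
      abel
    have hAle : ∀ q ∈ Comp C.e, chargeAbs C.e μ₂ q ≤ σP q + σN q := by
      intro q hq
      rw [rp_chargeAbs_eq]
      refine csSup_le (rp_chSet_nonempty _ _ hq) ?_
      rintro v ⟨r, hr, hrle, rfl⟩
      have hqr : q - r ∈ Comp C.e := rp_comp_sub hq hr hrle
      simp only
      rw [hid r hr, hid _ hqr]
      have h1 : σP r ≤ σP q := rp_charge_mono hσPch hσP0 hq hr hrle
      have h2 : σN (q - r) ≤ σN q := rp_charge_mono hσNch hσN0 hq hqr
        (sub_le_self _ (rp_comp_nonneg hr))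
      have h5 : σP r - σN r - σP (q - r) ≤ σP r :=
        le_trans (sub_le_self _ (hσP0 _ hqr)) (sub_le_self _ (hσN0 r hr))
      calc σP r - σN r + -(σP (q-r) - σN (q-r))
          = (σP r - σN r - σP (q-r)) + σN (q-r) := by abel
        _ ≤ σP r + σN (q-r) := add_le_add_left h5 _
        _ ≤ σP q + σN q := add_le_add h1 h2
    rw [rp_chInfAt_eq]
    refine le_antisymm ?_ (rpc_chInf_nonneg C hA0 hB0 he)
    refine le_trans (rpc_chInf_mono C (A := fun x => σP x + σN x) hAle hA0 hB0 he) ?_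
    rw [hsum0]

end RieszPaper

end
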